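/- arXiv:2106.14041 — 6 statements merged into one kernel-verified Lean document; each statement's English description precedes it below -/
import Mathlib

section
/- Let F be a field and q ∈ F with q+q^{-1} invertible. In F[z_1,z_2,...][[t]], let Z(t) = ∑_{n≥0} z_n t^n with z_0 = 1. Then Z((q+q^{-1})/(t+t^{-1})) = ∑_{n≥0} z↓_n [2]_q^n t^n, where z↓_0 = 1 and for n ≥ 1, z↓_n = ∑_{ℓ=0}^{⌊(n-1)/2⌋} (-1)^ℓ binom(n-1-ℓ, ℓ) [2]_q^{-2ℓ} z_{n-2ℓ}, and [2]_q = q + q^{-1}. -/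
noncomputable section

open PowerSeries

variable (F : Type*) [Field F]

/-- The generators `z_n` of `F[z_1, z_2, …]` (with the convention `z_0 = 1`),
realized inside the polynomial algebra on countably many variables indexed by `ℕ+`. -/
def z : ℕ → MvPolynomial ℕ+ F
  | 0 => 1
  | (n + 1) => MvPolynomial.X ⟨n + 1, Nat.succ_pos n⟩

/-- The elements `z↓_n`:  `z↓_0 = 1` and for `n ≥ 1`,
`z↓_n = ∑_{ℓ=0}^{⌊(n-1)/2⌋} (-1)^ℓ C(n-1-ℓ,ℓ) [2]_q^{-2ℓ} z_{n-2ℓ}`. -/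
def zdown (q : F) : ℕ → MvPolynomial ℕ+ F
  | 0 => 1
  | (n + 1) => ∑ ℓ ∈ Finset.range (n / 2 + 1),
      ((-1 : F) ^ ℓ * (Nat.choose (n - ℓ) ℓ : F) * ((q + q⁻¹)⁻¹) ^ (2 * ℓ)) •
        z F (n + 1 - 2 * ℓ)

/-- The elements `z^∨_n = [2]_q^n ∑_{k=0}^n q^{n-2k} z↓_k z↓_{n-k}`. -/
def zvee (q : F) (n : ℕ) : MvPolynomial ℕ+ F :=
  ((q + q⁻¹) ^ n) • ∑ k ∈ Finset.range (n + 1),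
    (q ^ ((n : ℤ) - 2 * (k : ℤ))) • (zdown F q k * zdown F q (n - k))

/-- The power series expansion of `(q+q⁻¹)·t·(1+t²)⁻¹`, i.e. of `(q+q⁻¹)/(t+t⁻¹)`. -/
def uSeries (q : F) : PowerSeries F :=
  PowerSeries.C (R := F) (q + q⁻¹) * PowerSeries.X * (1 + PowerSeries.X ^ 2)⁻¹


/-- coefficientwise: `(1+X²)^{-(n+1)}`. -/
def Wser (R : Type*) [CommRing R] (n : ℕ) : PowerSeries R :=
  PowerSeries.mk fun k =>
    if Even k then ((-1 : R) ^ (k / 2) * ((n + k / 2).choose (k / 2) : R)) else 0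

lemma coeff_mul_one_add_X_sq {R : Type*} [CommRing R] (f : PowerSeries R) (k : ℕ) :
    PowerSeries.coeff (R := R) k (f * (1 + PowerSeries.X ^ 2)) =
      PowerSeries.coeff (R := R) k f + if 2 ≤ k then PowerSeries.coeff (R := R) (k - 2) f else 0 := by
  rw [mul_add, mul_one, map_add, PowerSeries.coeff_mul_X_pow']

lemma Wser_zero_mul (R : Type*) [CommRing R] :
    Wser R 0 * (1 + PowerSeries.X ^ 2) = 1 := by
  ext k
  rw [coeff_mul_one_add_X_sq]
  rcases Nat.even_or_odd k with hk | hk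
  · obtain ⟨ℓ, rfl⟩ := hk
    match ℓ with
    | 0 => simp [Wser]
    | (ℓ + 1) =>
      have h2 : 2 ≤ (ℓ+1) + (ℓ+1) := by omega
      have he : Even ((ℓ+1) + (ℓ+1)) := ⟨ℓ+1, rfl⟩
      have he' : Even ((ℓ+1) + (ℓ+1) - 2) := ⟨ℓ, by omega⟩
      have hq1 : ((ℓ+1) + (ℓ+1)) / 2 = ℓ + 1 := by omega
      have hq2 : ((ℓ+1) + (ℓ+1) - 2) / 2 = ℓ := by omega
      rw [Wser, if_pos h2]
      simp only [PowerSeries.coeff_mk, if_pos he, if_pos he', hq1, hq2]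
      have : (PowerSeries.coeff (R := R) ((ℓ+1) + (ℓ+1))) 1 = 0 := by
        rw [PowerSeries.coeff_one, if_neg (by omega)]
      rw [this, pow_succ]
      simp only [Nat.choose_self, Nat.zero_add, zero_add, Nat.cast_one]
      ring
  · obtain ⟨ℓ, rfl⟩ := hk
    have ho : ¬ Even (2*ℓ + 1) := by simp [Nat.even_add_one, Nat.even_mul]
    have : (PowerSeries.coeff (R := R) (2*ℓ+1)) 1 = 0 := by
      rw [PowerSeries.coeff_one, if_neg (by omega)]
    rw [this, Wser]
    simp only [PowerSeries.coeff_mk, if_neg ho]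
    rcases le_or_gt 2 (2*ℓ+1) with h2 | h2
    · have ho' : ¬ Even (2*ℓ + 1 - 2) := by
        rcases ℓ with _ | ℓ
        · omega
        · have : 2*(ℓ+1)+1-2 = 2*ℓ+1 := by omega
          rw [this]; simp [Nat.even_add_one, Nat.even_mul]
      rw [if_pos h2, if_neg ho']; ring
    · rw [if_neg (by omega)]; ring

lemma Wser_succ_mul (R : Type*) [CommRing R] (n : ℕ) :
    Wser R (n + 1) * (1 + PowerSeries.X ^ 2) = Wser R n := by
  ext k
  rw [coeff_mul_one_add_X_sq]
  rcases Nat.even_or_odd k with hk | hk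
  · obtain ⟨ℓ, rfl⟩ := hk
    match ℓ with
    | 0 => simp [Wser]
    | (ℓ + 1) =>
      have h2 : 2 ≤ (ℓ+1) + (ℓ+1) := by omega
      have he : Even ((ℓ+1) + (ℓ+1)) := ⟨ℓ+1, rfl⟩
      have he' : Even ((ℓ+1) + (ℓ+1) - 2) := ⟨ℓ, by omega⟩
      have hq1 : ((ℓ+1) + (ℓ+1)) / 2 = ℓ + 1 := by omega
      have hq2 : ((ℓ+1) + (ℓ+1) - 2) / 2 = ℓ := by omega
      rw [Wser, Wser, if_pos h2]
      simp only [PowerSeries.coeff_mk, if_pos he, if_pos he', hq1, hq2]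
      have e1 : n + 1 + (ℓ + 1) = (n + ℓ + 1) + 1 := by omega
      have e2 : n + (ℓ + 1) = n + ℓ + 1 := by omega
      have e3 : n + 1 + ℓ = n + ℓ + 1 := by omega
      rw [e1, e2, e3, Nat.choose_succ_succ' (n + ℓ + 1) ℓ]
      push_cast
      rw [pow_succ]
      ring
  · obtain ⟨ℓ, rfl⟩ := hk
    have ho : ¬ Even (2*ℓ + 1) := by simp [Nat.even_add_one, Nat.even_mul]
    rw [Wser, Wser]
    simp only [PowerSeries.coeff_mk, if_neg ho]
    rcases le_or_gt 2 (2*ℓ+1) with h2 | h2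
    · have ho' : ¬ Even (2*ℓ + 1 - 2) := by
        rcases ℓ with _ | ℓ
        · omega
        · have : 2*(ℓ+1)+1-2 = 2*ℓ+1 := by omega
          rw [this]; simp [Nat.even_add_one, Nat.even_mul]
      rw [if_pos h2, if_neg ho']; ring
    · rw [if_neg (by omega)]; ring

lemma Wser_pow (R : Type*) [CommRing R] (n : ℕ) :
    (Wser R 0) ^ (n + 1) = Wser R n := by
  induction n with
  | zero => rw [pow_one]
  | succ n ih =>
    have key : (Wser R 0) ^ (n + 2) * (1 + PowerSeries.X ^ 2)
        = Wser R (n + 1) * (1 + PowerSeries.X ^ 2) := by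
      rw [pow_succ, mul_assoc, Wser_zero_mul, mul_one, ih, Wser_succ_mul]
    calc (Wser R 0) ^ (n + 2)
        = (Wser R 0) ^ (n + 2) * ((1 + PowerSeries.X ^ 2) * Wser R 0) := by
          rw [mul_comm (1 + PowerSeries.X ^ 2), Wser_zero_mul, mul_one]
      _ = ((Wser R 0) ^ (n + 2) * (1 + PowerSeries.X ^ 2)) * Wser R 0 := by ring
      _ = (Wser R (n + 1) * (1 + PowerSeries.X ^ 2)) * Wser R 0 := by rw [key]
      _ = Wser R (n + 1) * ((1 + PowerSeries.X ^ 2) * Wser R 0) := by ring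
      _ = Wser R (n + 1) := by rw [mul_comm (1 + PowerSeries.X ^ 2), Wser_zero_mul, mul_one]

lemma uSeries_eq (q : F) :
    uSeries F q = PowerSeries.C (R := F) (q + q⁻¹) * PowerSeries.X * Wser F 0 := by
  rw [uSeries]
  congr 1
  rw [PowerSeries.inv_eq_iff_mul_eq_one, Wser_zero_mul]
  simp

lemma map_Wser {R : Type*} [CommRing R] (f : F →+* R) (n : ℕ) :
    PowerSeries.map f (Wser F n) = Wser R n := by
  ext k
  simp [Wser, apply_ite f]

lemma coeff_U_pow {R : Type*} [CommRing R] (c : R) (m n : ℕ) :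
    PowerSeries.coeff (R := R) m ((PowerSeries.C (R := R) c * PowerSeries.X * Wser R 0) ^ (n + 1)) =
      c ^ (n + 1) *
        (if n + 1 ≤ m then
          (if Even (m - (n + 1)) then
            ((-1 : R) ^ ((m - (n + 1)) / 2) *
              ((n + (m - (n + 1)) / 2).choose ((m - (n + 1)) / 2) : R))
          else 0)
        else 0) := by
  rw [mul_pow, mul_pow, Wser_pow, ← map_pow, mul_assoc, PowerSeries.coeff_C_mul,
    PowerSeries.coeff_X_pow_mul']
  congr 1
  split_ifs with h h2
  · rw [Wser, PowerSeries.coeff_mk, if_pos h2]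
  · rw [Wser, PowerSeries.coeff_mk, if_neg h2]
  · rfl

/-- `Z((q+q⁻¹)/(t+t⁻¹)) = ∑_{n≥0} z↓_n [2]_q^n t^n`, where `Z(t) = ∑ z_n t^n` and the
left-hand side is the composite power series `∑_n z_n u(t)^n` with
`u(t) = (q+q⁻¹)t(1+t²)⁻¹`. -/
theorem Z_comp_u_eq (q : F) (hq0 : q ≠ 0) (h2 : q + q⁻¹ ≠ 0) :
    (PowerSeries.mk fun m => ∑ n ∈ Finset.range (m + 1),
        z F n * PowerSeries.coeff (R := _) m
          ((PowerSeries.map (algebraMap F (MvPolynomial ℕ+ F)) (uSeries F q)) ^ n))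
      = PowerSeries.mk fun m => ((q + q⁻¹) ^ m) • zdown F q m := by
  classical
  set R := MvPolynomial ℕ+ F with hR
  set φ := algebraMap F R with hφ
  set b := q + q⁻¹ with hbdef
  have hU : PowerSeries.map φ (uSeries F q)
      = PowerSeries.C (R := R) (φ b) * PowerSeries.X * Wser R 0 := by
    rw [uSeries_eq, map_mul, map_mul, PowerSeries.map_C, PowerSeries.map_X, map_Wser]
  refine PowerSeries.ext fun m => ?_
  rw [PowerSeries.coeff_mk, PowerSeries.coeff_mk, hU]
  cases m with
  | zero => simp [z, zdown]
  | succ n' =>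
    rw [Finset.sum_range_succ']
    have h0 : z F 0 * (PowerSeries.coeff (R := R) (n' + 1))
        ((PowerSeries.C (R := R) (φ b) * PowerSeries.X * Wser R 0) ^ 0) = 0 := by
      rw [pow_zero, z, PowerSeries.coeff_one, if_neg (by omega), mul_zero]
    rw [h0, add_zero, zdown, Finset.smul_sum]
    rw [← Finset.sum_filter_of_ne (p := fun i => Even (n' - i))
      (fun i hi hne => by
        have hi' : i < n' + 1 := Finset.mem_range.mp hi
        by_contra hodd
        apply hne
        have : n' + 1 - (i + 1) = n' - i := by omega
        rw [coeff_U_pow, this, if_pos (by omega), if_neg hodd, mul_zero, mul_zero])]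
    refine Finset.sum_nbij' (fun a => (n' - a) / 2) (fun ℓ => n' - 2 * ℓ) ?_ ?_ ?_ ?_ ?_
    · intro a ha
      simp only [Finset.mem_filter, Finset.mem_range] at ha ⊢
      omega
    · intro ℓ hℓ
      simp only [Finset.mem_filter, Finset.mem_range] at hℓ ⊢
      constructor
      · omega
      · exact ⟨ℓ - (n' - (n' - 2 * ℓ)) / 2 + ℓ, by omega⟩
    · intro a ha
      simp only [Finset.mem_filter, Finset.mem_range] at ha
      obtain ⟨h1, k, hk⟩ := ha
      beta_reduce
      omega
    · intro ℓ hℓ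
      simp only [Finset.mem_range] at hℓ
      beta_reduce
      omega
    · intro a ha
      simp only [Finset.mem_filter, Finset.mem_range] at ha
      obtain ⟨h1, hev⟩ := ha
      obtain ⟨L, hL⟩ := hev
      have hL2 : (n' - a) / 2 = L := by omega
      have ha' : a = n' - 2 * L := by omega
      beta_reduce
      rw [coeff_U_pow]
      have e1 : n' + 1 - (a + 1) = n' - a := by omega
      rw [e1, if_pos (by omega), if_pos ⟨L, hL⟩, hL2]
      have e2 : a + L = n' - L := by omega
      have e3 : n' + 1 - 2 * ((n' - a) / 2) = a + 1 := by omega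
      rw [hL2] at e3
      rw [e3]
      -- now scalar bookkeeping
      have hscal : b ^ (n' + 1) * ((-1 : F) ^ L * ((n' - L).choose L : F) * (b⁻¹) ^ (2 * L))
          = b ^ (a + 1) * ((-1 : F) ^ L * ((n' - L).choose L : F)) := by
        have : b ^ (a + 1) = b ^ (n' + 1) * (b ^ (2 * L))⁻¹ := by
          rw [← pow_sub₀ b h2 (by omega)]
          congr 1
          omega
        rw [this, inv_pow]
        ring
      rw [smul_smul, hscal, Algebra.smul_def, e2]
      simp only [map_mul, map_pow, map_neg, map_one, map_natCast]
      ring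
end
end

section
/- With notation as in the previous context, define S(t) = (q+q^{-1})t(q+q^{-1}t²)^{-1} and T(t) = (q+q^{-1})t(q^{-1}+qt²)^{-1} as formal power series (these are the expansions of (q+q^{-1})/(q^{-1}t+qt^{-1}) and (q+q^{-1})/(qt+q^{-1}t^{-1})). Then Z(S) = ∑_{n≥0} z↓_n q^{-n} [2]_q^n t^n and Z(T) = ∑_{n≥0} z↓_n q^n [2]_q^n t^n, where z↓_n is defined by z↓_0 = 1 and z↓_n = ∑_{ℓ=0}^{⌊(n-1)/2⌋} (-1)^ℓ binom(n-1-ℓ, ℓ) [2]_q^{-2ℓ} z_{n-2ℓ} for n ≥ 1. -/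
noncomputable section

open PowerSeries

variable (F : Type*) [Field F]

/-- The power series expansion of `(q+q⁻¹)·t·(q+q⁻¹t²)⁻¹`, i.e. of
`S = (q+q⁻¹)/(q⁻¹t+qt⁻¹)`. -/
def Sseries (q : F) : PowerSeries F :=
  PowerSeries.C (q + q⁻¹) * PowerSeries.X *
    (PowerSeries.C q + PowerSeries.C q⁻¹ * PowerSeries.X ^ 2)⁻¹

/-- The power series expansion of `(q+q⁻¹)·t·(q⁻¹+qt²)⁻¹`, i.e. of
`T = (q+q⁻¹)/(qt+q⁻¹t⁻¹)`. -/
def Tseries (q : F) : PowerSeries F :=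
  PowerSeries.C (q + q⁻¹) * PowerSeries.X *
    (PowerSeries.C q⁻¹ + PowerSeries.C q * PowerSeries.X ^ 2)⁻¹


section CommRingPart
variable {R : Type*} [CommRing R]

/-- Coefficient `t^m` of the `n`-th power of `c·t·(1+a t²)⁻¹`. -/
def pw (a c : R) (n m : ℕ) : R :=
  if n ≤ m ∧ 2 ∣ m - n then
    c ^ n * (-a) ^ ((m - n) / 2) * (Nat.choose (n + (m - n) / 2 - 1) ((m - n) / 2) : ℕ)
  else 0

def Pser (a c : R) (n : ℕ) : R⟦X⟧ := mk (pw a c n)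

lemma Pser_zero (a c : R) : Pser a c 0 = 1 := by
  ext m
  rw [Pser, coeff_mk, coeff_one, pw]
  rcases m with _ | m
  · simp
  · rcases Nat.even_or_odd (m+1) with h | h <;> obtain ⟨k, hk⟩ := h
    · rw [if_pos ⟨Nat.zero_le _, by omega⟩]
      have h2 : (m + 1 - 0) / 2 = k := by omega
      rw [h2, Nat.choose_eq_zero_of_lt (by omega)]
      simp
    · rw [if_neg (by omega)]; simp

lemma pw_rec (a c : R) (n m : ℕ) :
    pw a c (n + 1) (m + 1) + (if 2 ≤ m + 1 then pw a c (n + 1) (m + 1 - 2) else 0) * a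
      = c * pw a c n m := by
  simp only [pw]
  by_cases hg : n ≤ m ∧ 2 ∣ m - n
  · obtain ⟨hnm, ⟨j, hj⟩⟩ := hg
    rcases j with _ | j'
    · have hm : m = n := by omega
      rw [if_pos (show n + 1 ≤ m + 1 ∧ 2 ∣ m + 1 - (n + 1) by omega),
        if_pos (show n ≤ m ∧ 2 ∣ m - n by omega),
        show (m + 1 - (n + 1)) / 2 = 0 by omega, show (m - n) / 2 = 0 by omega]
      by_cases hm2 : 2 ≤ m + 1
      · rw [if_pos hm2, if_neg (show ¬(n + 1 ≤ m + 1 - 2 ∧ 2 ∣ m + 1 - 2 - (n + 1)) by omega)]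
        simp [Nat.choose]
        ring
      · rw [if_neg hm2]
        simp [Nat.choose]
        ring
    · rw [if_pos (show n + 1 ≤ m + 1 ∧ 2 ∣ m + 1 - (n + 1) by omega),
        if_pos (show 2 ≤ m + 1 by omega),
        if_pos (show n + 1 ≤ m + 1 - 2 ∧ 2 ∣ m + 1 - 2 - (n + 1) by omega),
        if_pos (show n ≤ m ∧ 2 ∣ m - n by omega),
        show (m + 1 - (n + 1)) / 2 = j' + 1 by omega,
        show (m + 1 - 2 - (n + 1)) / 2 = j' by omega,
        show (m - n) / 2 = j' + 1 by omega]
      have e1 : n + 1 + (j' + 1) - 1 = (n + j') + 1 := by omega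
      have e2 : n + 1 + j' - 1 = n + j' := by omega
      have e3 : n + (j' + 1) - 1 = n + j' := by omega
      rw [e1, e2, e3, Nat.choose_succ_succ (n + j') j']
      push_cast
      ring
  · rw [if_neg hg, mul_zero,
      if_neg (show ¬(n + 1 ≤ m + 1 ∧ 2 ∣ m + 1 - (n + 1)) by omega)]
    by_cases hm2 : 2 ≤ m + 1
    · rw [if_pos hm2, if_neg (show ¬(n + 1 ≤ m + 1 - 2 ∧ 2 ∣ m + 1 - 2 - (n + 1)) by omega)]
      simp
    · rw [if_neg hm2]; simp

lemma Pser_step (a c : R) (n : ℕ) :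
    Pser a c (n + 1) * (1 + C a * X ^ 2) = C c * X * Pser a c n := by
  ext m
  rw [mul_add, mul_one, map_add, mul_comm (C a) (X^2 : R⟦X⟧), ← mul_assoc,
    coeff_mul_C, coeff_mul_X_pow', mul_assoc (C c), coeff_C_mul,
    show (X : R⟦X⟧) = X ^ 1 by ring, mul_comm (X^1 : R⟦X⟧), coeff_mul_X_pow']
  simp only [Pser, coeff_mk]
  rcases m with _ | m
  · simp [pw]
  · rw [if_pos (show 1 ≤ m + 1 by omega), Nat.add_sub_cancel, ← pw_rec a c n m]


lemma Pser_mul_pow (a c : R) (n : ℕ) :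
    Pser a c n * (1 + C a * X ^ 2) ^ n = (C c * X) ^ n := by
  induction n with
  | zero => simp [Pser_zero]
  | succ n ih =>
    calc Pser a c (n + 1) * (1 + C a * X ^ 2) ^ (n + 1)
        = (Pser a c (n + 1) * (1 + C a * X ^ 2)) * (1 + C a * X ^ 2) ^ n := by ring
      _ = (C c * X * Pser a c n) * (1 + C a * X ^ 2) ^ n := by rw [Pser_step]
      _ = (C c * X) * (Pser a c n * (1 + C a * X ^ 2) ^ n) := by ring
      _ = (C c * X) * (C c * X) ^ n := by rw [ih]
      _ = (C c * X) ^ (n + 1) := by ring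

end CommRingPart

variable {K : Type*} [Field K]

lemma Sseries_pow (q : K) (hq0 : q ≠ 0) (n : ℕ) :
    Sseries K q ^ n = Pser (q⁻¹ * q⁻¹) ((q + q⁻¹) * q⁻¹) n := by
  set U : K⟦X⟧ := PowerSeries.C q + PowerSeries.C q⁻¹ * X ^ 2 with hU
  have hcU : constantCoeff U = q := by simp [hU]
  have hcU' : constantCoeff U ≠ 0 := by rw [hcU]; exact hq0
  have hUne : U ≠ 0 := fun h => hq0 (by rw [← hcU, h, map_zero])
  have hSU : Sseries K q * U = PowerSeries.C (q + q⁻¹) * X := by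
    rw [Sseries, mul_assoc, PowerSeries.inv_mul_cancel U hcU', mul_one]
  have hUfac : U = PowerSeries.C q * (1 + PowerSeries.C (q⁻¹ * q⁻¹) * X ^ 2) := by
    rw [mul_add, mul_one, ← mul_assoc, ← map_mul, show q * (q⁻¹ * q⁻¹) = q⁻¹ by field_simp]
  apply mul_right_cancel₀ (pow_ne_zero n hUne)
  rw [← mul_pow, hSU]
  conv_rhs => rw [hUfac, mul_pow, mul_left_comm, Pser_mul_pow, ← mul_pow, ← mul_assoc,
    ← map_mul, show q * ((q + q⁻¹) * q⁻¹) = q + q⁻¹ by field_simp]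

lemma Sseries_pow_coeff (q : K) (hq0 : q ≠ 0) (n m : ℕ) :
    coeff m (Sseries K q ^ n) = pw (q⁻¹ * q⁻¹) ((q + q⁻¹) * q⁻¹) n m := by
  rw [Sseries_pow q hq0 n, Pser, coeff_mk]


lemma scal (q : K) (hq0 : q ≠ 0) (h2 : q + q⁻¹ ≠ 0) (N ℓ : ℕ) :
    ((q + q⁻¹) * q⁻¹) ^ N * (-(q⁻¹ * q⁻¹)) ^ ℓ
      = q⁻¹ ^ (N + 2 * ℓ) * (q + q⁻¹) ^ (N + 2 * ℓ) * ((-1 : K) ^ ℓ * ((q + q⁻¹)⁻¹) ^ (2 * ℓ)) := by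
  have h1 : (q + q⁻¹) ^ (2 * ℓ) * ((q + q⁻¹)⁻¹) ^ (2 * ℓ) = 1 := by
    rw [← mul_pow, mul_inv_cancel₀ h2, one_pow]
  rw [mul_pow]
  linear_combination (-(q⁻¹ ^ (N + 2 * ℓ) * (q + q⁻¹) ^ N * (-1 : K) ^ ℓ)) * h1

lemma key (q : K) (hq0 : q ≠ 0) (h2 : q + q⁻¹ ≠ 0) :
    ((PowerSeries.mk fun m => ∑ n ∈ Finset.range (m + 1),
        z K n * PowerSeries.coeff m
          ((PowerSeries.map (algebraMap K (MvPolynomial ℕ+ K)) (Sseries K q)) ^ n))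
      = PowerSeries.mk fun m => (q⁻¹ ^ m * (q + q⁻¹) ^ m) • zdown K q m) := by
  apply PowerSeries.ext
  intro m
  rw [coeff_mk, coeff_mk]
  have hc : ∀ n, (PowerSeries.coeff m)
        ((PowerSeries.map (algebraMap K (MvPolynomial ℕ+ K)) (Sseries K q)) ^ n)
      = MvPolynomial.C (pw (q⁻¹ * q⁻¹) ((q + q⁻¹) * q⁻¹) n m) := by
    intro n
    rw [← map_pow, PowerSeries.coeff_map, Sseries_pow_coeff q hq0, MvPolynomial.algebraMap_eq]
  simp only [hc]
  rcases m with _ | M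
  · simp [pw, z, zdown]
  · set f : ℕ → MvPolynomial ℕ+ K :=
      fun n => z K n * MvPolynomial.C (pw (q⁻¹ * q⁻¹) ((q + q⁻¹) * q⁻¹) n (M + 1)) with hf
    have himg : Finset.image (fun ℓ => M + 1 - 2 * ℓ) (Finset.range (M / 2 + 1))
        ⊆ Finset.range (M + 1 + 1) := by
      intro x hx
      simp only [Finset.mem_image, Finset.mem_range] at hx ⊢
      omega
    have hinj : ∀ x ∈ Finset.range (M / 2 + 1), ∀ y ∈ Finset.range (M / 2 + 1),
        M + 1 - 2 * x = M + 1 - 2 * y → x = y := by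
      intro x hx y hy h
      simp only [Finset.mem_range] at hx hy
      omega
    have hvan : ∀ n ∈ Finset.range (M + 1 + 1),
        n ∉ Finset.image (fun ℓ => M + 1 - 2 * ℓ) (Finset.range (M / 2 + 1)) → f n = 0 := by
      intro n hn hnot
      simp only [Finset.mem_range] at hn
      simp only [Finset.mem_image, Finset.mem_range, not_exists, not_and] at hnot
      by_cases hg : n ≤ M + 1 ∧ 2 ∣ M + 1 - n
      · have hn0 : n = 0 := by
          by_contra h0
          exact absurd (show M + 1 - 2 * ((M + 1 - n) / 2) = n by omega)
            (by have := hnot ((M + 1 - n) / 2); intro hh; exact this (by omega) hh)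
        subst hn0
        rw [hf]
        simp only
        rw [pw, if_pos hg, Nat.choose_eq_zero_of_lt (by omega)]
        simp
      · rw [hf]
        simp only
        rw [pw, if_neg hg]
        simp
    calc ∑ n ∈ Finset.range (M + 1 + 1), f n
        = ∑ n ∈ Finset.image (fun ℓ => M + 1 - 2 * ℓ) (Finset.range (M / 2 + 1)), f n :=
          (Finset.sum_subset himg hvan).symm
      _ = ∑ ℓ ∈ Finset.range (M / 2 + 1), f (M + 1 - 2 * ℓ) := Finset.sum_image hinj
      _ = (q⁻¹ ^ (M + 1) * (q + q⁻¹) ^ (M + 1)) • zdown K q (M + 1) := by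
          rw [zdown, Finset.smul_sum]
          refine Finset.sum_congr rfl fun ℓ hℓ => ?_
          simp only [Finset.mem_range] at hℓ
          rw [hf]
          simp only
          rw [pw, if_pos (show M + 1 - 2 * ℓ ≤ M + 1 ∧ 2 ∣ M + 1 - (M + 1 - 2 * ℓ) by omega),
            show (M + 1 - (M + 1 - 2 * ℓ)) / 2 = ℓ by omega,
            show M + 1 - 2 * ℓ + ℓ - 1 = M - ℓ by omega,
            mul_comm (z K (M + 1 - 2 * ℓ)), ← MvPolynomial.smul_eq_C_mul, smul_smul]
          congr 1
          have hsc := scal q hq0 h2 (M + 1 - 2 * ℓ) ℓ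
          rw [show M + 1 - 2 * ℓ + 2 * ℓ = M + 1 by omega] at hsc
          linear_combination ((Nat.choose (M - ℓ) ℓ : K)) * hsc

/-- `Z(S) = ∑_{n≥0} z↓_n q^{-n} [2]_q^n t^n` and `Z(T) = ∑_{n≥0} z↓_n q^n [2]_q^n t^n`,
where `Z(S)` is the composite power series `∑_n z_n S(t)^n`, and similarly for `T`. -/
theorem Z_comp_S_and_T (q : F) (hq0 : q ≠ 0) (h2 : q + q⁻¹ ≠ 0) :
    ((PowerSeries.mk fun m => ∑ n ∈ Finset.range (m + 1),
        z F n * PowerSeries.coeff m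
          ((PowerSeries.map (algebraMap F (MvPolynomial ℕ+ F)) (Sseries F q)) ^ n))
      = PowerSeries.mk fun m => (q⁻¹ ^ m * (q + q⁻¹) ^ m) • zdown F q m) ∧
    ((PowerSeries.mk fun m => ∑ n ∈ Finset.range (m + 1),
        z F n * PowerSeries.coeff m
          ((PowerSeries.map (algebraMap F (MvPolynomial ℕ+ F)) (Tseries F q)) ^ n))
      = PowerSeries.mk fun m => (q ^ m * (q + q⁻¹) ^ m) • zdown F q m) := by
  constructor
  · exact key q hq0 h2
  · have hT : Tseries F q = Sseries F q⁻¹ := by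
      rw [Sseries, Tseries, inv_inv, add_comm q⁻¹ q]
    have hz : zdown F q⁻¹ = zdown F q := by
      funext n
      cases n with
      | zero => rfl
      | succ n => rw [zdown, zdown, inv_inv, add_comm q⁻¹ q]
    have h2' : q⁻¹ + (q⁻¹)⁻¹ ≠ 0 := by rw [inv_inv, add_comm]; exact h2
    have hk := key q⁻¹ (inv_ne_zero hq0) h2'
    rw [inv_inv] at hk
    rw [add_comm q⁻¹ q] at hk
    rw [hz] at hk
    rw [hT]
    exact hk
end
end

section
/- With S, T, Z as above, define z^∨_n = [2]_q^n ∑_{k=0}^n q^{n-2k} z↓_k z↓_{n-k} for n ≥ 0 (so z^∨_0 = 1), and Z^∨(t) = ∑_{n≥0} z^∨_n t^n. Then Z^∨(t) = Z(S)·Z(T) as formal power series in t over F[z_1,z_2,...]. -/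
noncomputable section

open PowerSeries

variable (F : Type*) [Field F]

namespace ZveeAux

variable {F : Type*} [Field F]

/-- coefficient of `X^m` in `(C b * X * (C u + C v * X²)⁻¹)^n`. -/
def pcoef (b u v : F) (n m : ℕ) : F :=
  if 2 ∣ (m - n) ∧ n ≤ m then
    (b / u) ^ n * (-(v / u)) ^ ((m - n) / 2) *
      (Nat.choose (n + (m - n) / 2 - 1) ((m - n) / 2) : F)
  else 0

lemma pcoef_zero (b u v : F) : PowerSeries.mk (pcoef b u v 0) = 1 := by
  ext m
  rcases m with _ | m
  · simp [pcoef]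
  · rw [coeff_mk, coeff_one, if_neg (Nat.succ_ne_zero m)]
    unfold pcoef
    split_ifs with h
    · have hj : (m + 1 - 0) / 2 ≥ 1 := by
        rcases h.1 with ⟨j, hj⟩; omega
      rw [Nat.choose_eq_zero_of_lt (by omega)]
      simp
    · rfl

lemma key (b u v : F) (hu : u ≠ 0) (n : ℕ) :
    (C u + C v * X ^ 2) * PowerSeries.mk (pcoef b u v (n + 1)) =
      C b * X * PowerSeries.mk (pcoef b u v n) := by
  ext m
  rw [add_mul, map_add, coeff_C_mul, mul_assoc, coeff_C_mul, coeff_X_pow_mul',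
    mul_assoc, coeff_C_mul, ← pow_one (X : F⟦X⟧), coeff_X_pow_mul']
  simp only [coeff_mk]
  by_cases hmain : n + 1 ≤ m ∧ 2 ∣ (m - (n + 1))
  · obtain ⟨hm, j, hj⟩ := hmain
    have e1 : pcoef b u v (n + 1) m
        = (b / u) ^ (n + 1) * (-(v / u)) ^ j * (Nat.choose (n + j) j : F) := by
      rw [pcoef, if_pos ⟨⟨j, hj⟩, hm⟩]
      have h2 : (m - (n + 1)) / 2 = j := by omega
      rw [h2]
      congr 3
      omega
    have e3 : pcoef b u v n (m - 1)
        = (b / u) ^ n * (-(v / u)) ^ j * (Nat.choose (n + j - 1) j : F) := by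
      rw [pcoef, if_pos ⟨⟨j, by omega⟩, by omega⟩]
      have h2 : (m - 1 - n) / 2 = j := by omega
      rw [h2]
    rcases Nat.eq_zero_or_pos j with hj0 | hj1
    · subst hj0
      have e2 : (if 2 ≤ m then pcoef b u v (n + 1) (m - 2) else 0) = 0 := by
        split_ifs with h
        · rw [pcoef, if_neg]; rintro ⟨-, hle⟩; omega
        · rfl
      rw [e2, if_pos (by omega : 1 ≤ m), e1, e3]
      simp only [pow_zero, Nat.choose_zero_right, Nat.cast_one, mul_one]
      obtain ⟨c, hc⟩ : ∃ c, b / u = c := ⟨_, rfl⟩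
      have hc' : u * c = b := by rw [← hc]; field_simp
      rw [hc, ← hc']
      ring
    · have e2 : (if 2 ≤ m then pcoef b u v (n + 1) (m - 2) else 0)
          = (b / u) ^ (n + 1) * (-(v / u)) ^ (j - 1) * (Nat.choose (n + j - 1) (j - 1) : F) := by
        rw [if_pos (by omega : 2 ≤ m), pcoef, if_pos ⟨⟨j - 1, by omega⟩, by omega⟩]
        have h2 : (m - 2 - (n + 1)) / 2 = j - 1 := by omega
        rw [h2]
        congr 3
        omega
      rw [e2, if_pos (by omega : 1 ≤ m), e1, e3]
      have hpascal : (Nat.choose (n + j) j : F)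
          = (Nat.choose (n + j - 1) j : F) + (Nat.choose (n + j - 1) (j - 1) : F) := by
        have h := Nat.choose_succ_succ (n + j - 1) (j - 1)
        simp only [Nat.succ_eq_add_one] at h
        have ha : n + j - 1 + 1 = n + j := by omega
        have hb : j - 1 + 1 = j := by omega
        rw [ha, hb] at h
        rw [h]
        push_cast
        ring
      have hp : (-(v / u)) ^ j = (-(v / u)) ^ (j - 1) * (-(v / u)) := by
        rw [← pow_succ]
        congr 1
        omega
      rw [hpascal, hp]
      obtain ⟨c, hc⟩ : ∃ c, b / u = c := ⟨_, rfl⟩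
      obtain ⟨w, hw⟩ : ∃ w, v / u = w := ⟨_, rfl⟩
      have hc' : u * c = b := by rw [← hc]; field_simp
      have hw' : u * w = v := by rw [← hw]; field_simp
      rw [hc, hw, ← hc', ← hw']
      ring
  · have e1 : pcoef b u v (n + 1) m = 0 := by
      rw [pcoef, if_neg]
      rintro ⟨hd, hle⟩
      exact hmain ⟨hle, hd⟩
    have e2 : (if 2 ≤ m then pcoef b u v (n + 1) (m - 2) else 0) = 0 := by
      split_ifs with h
      · rw [pcoef, if_neg]
        rintro ⟨⟨k, hk⟩, hle⟩
        exact hmain ⟨by omega, ⟨k + 1, by omega⟩⟩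
      · rfl
    have e3 : (if 1 ≤ m then pcoef b u v n (m - 1) else 0) = 0 := by
      split_ifs with h
      · rw [pcoef, if_neg]
        rintro ⟨⟨k, hk⟩, hle⟩
        exact hmain ⟨by omega, ⟨k, by omega⟩⟩
      · rfl
    rw [e1, e2, e3]
    ring

lemma pow_eq (b u v : F) (hu : u ≠ 0) (n : ℕ) :
    (C b * X * (C u + C v * X ^ 2)⁻¹) ^ n = PowerSeries.mk (pcoef b u v n) := by
  have hM : constantCoeff (C u + C v * X ^ 2) ≠ 0 := by
    simpa using hu
  induction n with
  | zero => simpa using (pcoef_zero b u v).symm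
  | succ n ih =>
    have hMne : (C u + C v * X ^ 2) ≠ (0 : F⟦X⟧) := by
      intro h
      rw [h] at hM
      exact hM (map_zero _)
    apply mul_left_cancel₀ hMne
    have h1 : (C u + C v * X ^ 2) * (C b * X * (C u + C v * X ^ 2)⁻¹)
        = C b * X := by
      rw [mul_comm, mul_assoc, PowerSeries.inv_mul_cancel _ hM, mul_one]
    have h2 : (C b * X * (C u + C v * X ^ 2)⁻¹) ^ (n + 1)
        = (C b * X * (C u + C v * X ^ 2)⁻¹) *
          (C b * X * (C u + C v * X ^ 2)⁻¹) ^ n := pow_succ' _ n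
    rw [key b u v hu n, h2, ← mul_assoc, h1, ih]

lemma sum_z_pcoef (q u : F) (hu : u ≠ 0) (hb : q + q⁻¹ ≠ 0) (m : ℕ) :
    ∑ n ∈ Finset.range (m + 1),
      z F n * algebraMap F (MvPolynomial ℕ+ F) (pcoef (q + q⁻¹) u u⁻¹ n m)
      = (((q + q⁻¹) / u) ^ m) • zdown F q m := by
  rcases m with _ | N
  · simp [pcoef, z, zdown]
  · set φ := algebraMap F (MvPolynomial ℕ+ F) with hφ
    rw [zdown, Finset.smul_sum]
    have himg : Finset.image (fun ℓ => N + 1 - 2 * ℓ) (Finset.range (N / 2 + 1))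
        ⊆ Finset.range (N + 1 + 1) := by
      intro x hx
      simp only [Finset.mem_image, Finset.mem_range] at hx ⊢
      omega
    have h1 : ∑ n ∈ Finset.range (N + 1 + 1), z F n * φ (pcoef (q + q⁻¹) u u⁻¹ n (N + 1))
        = ∑ n ∈ Finset.image (fun ℓ => N + 1 - 2 * ℓ) (Finset.range (N / 2 + 1)),
            z F n * φ (pcoef (q + q⁻¹) u u⁻¹ n (N + 1)) := by
      refine (Finset.sum_subset himg ?_).symm
      intro n _ hnot
      have hz : pcoef (q + q⁻¹) u u⁻¹ n (N + 1) = 0 := by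
        rw [pcoef]
        split_ifs with h
        · rcases h with ⟨⟨k, hk⟩, hle⟩
          rcases Nat.eq_zero_or_pos n with h0 | hpos
          · subst h0
            rw [Nat.choose_eq_zero_of_lt (by omega)]
            simp
          · exact absurd (by
              simp only [Finset.mem_image, Finset.mem_range]
              exact ⟨(N + 1 - n) / 2, by omega, by omega⟩) hnot
        · rfl
      rw [hz, map_zero, mul_zero]
    rw [h1, Finset.sum_image (by
      intro a ha b hb hab
      simp only [Finset.coe_range, Set.mem_Iio, Finset.mem_range] at ha hb hab
      omega)]
    refine Finset.sum_congr rfl ?_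
    intro ℓ hℓ
    simp only [Finset.mem_range] at hℓ
    obtain ⟨K, hK1, hK2⟩ : ∃ K, N + 1 - 2 * ℓ = K ∧ N + 1 = K + 2 * ℓ :=
      ⟨_, rfl, by omega⟩
    have e : pcoef (q + q⁻¹) u u⁻¹ (N + 1 - 2 * ℓ) (N + 1)
        = ((q + q⁻¹) / u) ^ (N + 1 - 2 * ℓ) * (-(u⁻¹ / u)) ^ ℓ * (Nat.choose (N - ℓ) ℓ : F) := by
      rw [pcoef, if_pos ⟨⟨ℓ, by omega⟩, by omega⟩]
      have h2 : (N + 1 - (N + 1 - 2 * ℓ)) / 2 = ℓ := by omega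
      rw [h2]
      congr 3
      omega
    rw [e, mul_comm, ← Algebra.smul_def, smul_smul, hK1, hK2]
    congr 1
    obtain ⟨c, hc⟩ : ∃ c, (q + q⁻¹) / u = c := ⟨_, rfl⟩
    obtain ⟨x, hx0⟩ : ∃ x, (q + q⁻¹)⁻¹ = x := ⟨_, rfl⟩
    have hu1 : u⁻¹ = c * x := by
      rw [← hc, ← hx0, div_mul_eq_mul_div, mul_inv_cancel₀ hb, one_div]
    have h5 : -(u⁻¹ / u) = -((c * x) * (c * x)) := by
      rw [div_eq_mul_inv, hu1]
    rw [hc, hx0, h5]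
    ring

lemma factor_S (q : F) (hq0 : q ≠ 0) (hb : q + q⁻¹ ≠ 0) :
    (PowerSeries.mk fun m => ∑ n ∈ Finset.range (m + 1),
        z F n * PowerSeries.coeff m
          ((PowerSeries.map (algebraMap F (MvPolynomial ℕ+ F))
            (C (q + q⁻¹) * X * (C q + C q⁻¹ * X ^ 2)⁻¹)) ^ n))
      = PowerSeries.mk fun m => (((q + q⁻¹) / q) ^ m) • zdown F q m := by
  refine PowerSeries.ext fun m => ?_
  rw [coeff_mk, coeff_mk, ← sum_z_pcoef q q hq0 hb m]
  refine Finset.sum_congr rfl ?_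
  intro n _
  rw [← map_pow, pow_eq _ _ _ hq0, coeff_map, coeff_mk]

lemma factor_T (q : F) (hq0 : q ≠ 0) (hb : q + q⁻¹ ≠ 0) :
    (PowerSeries.mk fun m => ∑ n ∈ Finset.range (m + 1),
        z F n * PowerSeries.coeff m
          ((PowerSeries.map (algebraMap F (MvPolynomial ℕ+ F))
            (C (q + q⁻¹) * X * (C q⁻¹ + C q * X ^ 2)⁻¹)) ^ n))
      = PowerSeries.mk fun m => (((q + q⁻¹) / q⁻¹) ^ m) • zdown F q m := by
  have hqi : q⁻¹ ≠ 0 := inv_ne_zero hq0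
  refine PowerSeries.ext fun m => ?_
  have h := sum_z_pcoef q q⁻¹ hqi hb m
  rw [inv_inv] at h
  rw [coeff_mk, coeff_mk, ← h]
  refine Finset.sum_congr rfl ?_
  intro n _
  rw [← map_pow, pow_eq _ _ _ hqi, coeff_map, coeff_mk]

end ZveeAux

theorem Zvee_eq_ZS_mul_ZT' (q : F) (hq0 : q ≠ 0) (h2 : q + q⁻¹ ≠ 0) :
    (PowerSeries.mk fun n => ((q + q⁻¹) ^ n) • ∑ k ∈ Finset.range (n + 1),
        (q ^ ((n : ℤ) - 2 * (k : ℤ))) • (zdown F q k * zdown F q (n - k)))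
      = (PowerSeries.mk fun m => (((q + q⁻¹) / q) ^ m) • zdown F q m) *
        (PowerSeries.mk fun m => (((q + q⁻¹) / q⁻¹) ^ m) • zdown F q m) := by
  refine PowerSeries.ext fun n => ?_
  rw [coeff_mk, coeff_mul]
  simp only [coeff_mk]
  rw [Finset.Nat.sum_antidiagonal_eq_sum_range_succ_mk, Finset.smul_sum]
  refine Finset.sum_congr rfl ?_
  intro k hk
  simp only [Finset.mem_range] at hk
  rw [smul_mul_smul_comm, smul_smul]
  congr 1
  obtain ⟨j, hj1, hj2⟩ : ∃ j, n - k = j ∧ n = k + j := ⟨_, rfl, by omega⟩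
  have he : (n : ℤ) - 2 * (k : ℤ) = ((j : ℕ) : ℤ) - (k : ℤ) := by omega
  rw [he, zpow_sub₀ hq0, zpow_natCast, zpow_natCast, hj1, hj2]
  show (q + q⁻¹) ^ (k + j) * (q ^ j / q ^ k)
      = ((q + q⁻¹) / q) ^ k * ((q + q⁻¹) / q⁻¹) ^ j
  rw [div_inv_eq_mul, pow_add, div_pow, mul_pow]
  ring

/-- `Z^∨(t) = Z(S)·Z(T)`, where `Z^∨(t) = ∑_n z^∨_n t^n` and `Z(S)`, `Z(T)` are the
composite power series `∑_n z_n S(t)^n`, `∑_n z_n T(t)^n`. -/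
theorem Zvee_eq_ZS_mul_ZT (q : F) (hq0 : q ≠ 0) (h2 : q + q⁻¹ ≠ 0) :
    (PowerSeries.mk fun n => zvee F q n)
      = (PowerSeries.mk fun m => ∑ n ∈ Finset.range (m + 1),
          z F n * PowerSeries.coeff m
            ((PowerSeries.map (algebraMap F (MvPolynomial ℕ+ F)) (Sseries F q)) ^ n)) *
        (PowerSeries.mk fun m => ∑ n ∈ Finset.range (m + 1),
          z F n * PowerSeries.coeff m
            ((PowerSeries.map (algebraMap F (MvPolynomial ℕ+ F)) (Tseries F q)) ^ n)) := by
  simp only [Sseries, Tseries, zvee]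
  rw [ZveeAux.factor_S q hq0 h2, ZveeAux.factor_T q hq0 h2]
  exact Zvee_eq_ZS_mul_ZT' F q hq0 h2
end
end

section
/- For n ≥ 1, the element z^∨_n lies in the F-span of monomials z_λ of weighted degree at most n (where z_k has weight k), its constant term is 0, and the coefficient of the monomial z_n in z^∨_n equals (q+q^{-1})^n (q^n + q^{-n}). -/
noncomputable section

open PowerSeries

variable (F : Type*) [Field F]

lemma z_eq (k : ℕ) (hk : 1 ≤ k) : z F k = MvPolynomial.X (σ := ℕ+) ⟨k, hk⟩ := by
  cases k with
  | zero => omega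
  | succ m => rfl

/-- Weighted degree bound for `zdown`. -/
lemma zdown_support (q : F) (k : ℕ) :
    ∀ d ∈ (zdown F q k).support, (d.sum fun i m => (i : ℕ) * m) ≤ k := by
  classical
  cases k with
  | zero =>
    intro d hd
    rw [zdown] at hd
    rw [MvPolynomial.mem_support_iff, MvPolynomial.coeff_one] at hd
    have hd0 : d = 0 := by
      by_contra h
      simp [Ne.symm h] at hd
    subst hd0
    simp [Finsupp.sum_zero_index]
  | succ n =>
    intro d hd
    rw [zdown] at hd
    have hd' := MvPolynomial.support_sum hd
    simp only [Finset.mem_biUnion, Finset.mem_range] at hd'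
    obtain ⟨ℓ, hℓ, hdmem⟩ := hd'
    have h2ℓ : 2 * ℓ ≤ n := by omega
    have hdmem' := MvPolynomial.support_smul hdmem
    have h1 : 1 ≤ n + 1 - 2 * ℓ := by omega
    erw [z_eq F _ h1, MvPolynomial.mem_support_iff, MvPolynomial.coeff_X'] at hdmem'
    by_cases hsing : Finsupp.single (α := ℕ+) ⟨n + 1 - 2 * ℓ, h1⟩ 1 = d
    · subst hsing
      erw [Finsupp.sum_single_index (by simp)]
      show (n + 1 - 2 * ℓ) * 1 ≤ n + 1
      omega
    · simp [hsing] at hdmem'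

lemma zdown_constantCoeff (q : F) (k : ℕ) (hk : 1 ≤ k) :
    MvPolynomial.constantCoeff (zdown F q k) = 0 := by
  cases k with
  | zero => omega
  | succ n =>
    rw [zdown, map_sum]
    refine Finset.sum_eq_zero fun ℓ hℓ => ?_
    rw [Finset.mem_range] at hℓ
    have h2ℓ : 2 * ℓ ≤ n := by omega
    have h1 : 1 ≤ n + 1 - 2 * ℓ := by omega
    rw [z_eq F _ h1]
    simp [MvPolynomial.constantCoeff_X]
    exact Or.inr (MvPolynomial.constantCoeff_X _ _)

lemma zdown_top_coeff (q : F) (n : ℕ) (hn : 1 ≤ n) :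
    MvPolynomial.coeff (Finsupp.single (α := ℕ+) ⟨n, hn⟩ 1) (zdown F q n) = 1 := by
  classical
  cases n with
  | zero => omega
  | succ m =>
    rw [zdown, MvPolynomial.coeff_sum]
    rw [Finset.sum_eq_single 0]
    · have h1 : 1 ≤ m + 1 - 2 * 0 := by omega
      erw [MvPolynomial.coeff_smul, z_eq F _ h1, MvPolynomial.coeff_X']
      have : (⟨m + 1 - 2 * 0, h1⟩ : ℕ+) = (⟨m + 1, hn⟩ : ℕ+) := by
        ext; simp
      rw [this]
      simp
    · intro ℓ hℓ hℓ0
      rw [Finset.mem_range] at hℓ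
      have h2ℓ : 2 * ℓ ≤ m := by omega
      have h1 : 1 ≤ m + 1 - 2 * ℓ := by omega
      erw [MvPolynomial.coeff_smul, z_eq F _ h1, MvPolynomial.coeff_X']
      have hne : Finsupp.single (α := ℕ+) ⟨m + 1 - 2 * ℓ, h1⟩ 1 ≠
          Finsupp.single (α := ℕ+) ⟨m + 1, hn⟩ 1 := by
        intro h
        have h' := (Finsupp.single_left_inj (one_ne_zero)).mp h
        have : m + 1 - 2 * ℓ = m + 1 := congrArg PNat.val h'
        omega
      rw [if_neg hne]
      simp
    · intro h
      simp at h

/-- If two polynomials have zero constant term, the coefficient of a single variable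
in their product vanishes. -/
lemma coeff_single_one_mul (p r : MvPolynomial ℕ+ F) (i : ℕ+)
    (hp : MvPolynomial.constantCoeff p = 0) (hr : MvPolynomial.constantCoeff r = 0) :
    MvPolynomial.coeff (Finsupp.single i 1) (p * r) = 0 := by
  classical
  rw [MvPolynomial.coeff_mul]
  refine Finset.sum_eq_zero fun x hx => ?_
  rw [Finset.HasAntidiagonal.mem_antidiagonal] at hx
  have key : ∀ j, x.1 j + x.2 j = (Finsupp.single i 1) j := fun j => by
    rw [← hx]; simp
  have : x.1 = 0 ∨ x.2 = 0 := by
    rcases Nat.eq_zero_or_pos (x.1 i) with h0 | hpos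
    · left
      ext j
      by_cases hj : j = i
      · subst hj; simpa using h0
      · have hk := key j
        rw [Finsupp.single_apply, if_neg (fun h => hj h.symm)] at hk
        simpa using Nat.eq_zero_of_add_eq_zero_right hk |>.symm ▸ (by omega : x.1 j = 0)
    · right
      ext j
      by_cases hj : j = i
      · subst hj
        have hk := key j
        rw [Finsupp.single_apply, if_pos rfl] at hk
        simp only [Finsupp.coe_zero, Pi.zero_apply]
        omega
      · have hk := key j
        rw [Finsupp.single_apply, if_neg (fun h => hj h.symm)] at hk
        simp only [Finsupp.coe_zero, Pi.zero_apply]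
        omega
  rcases this with h | h
  · have hc : MvPolynomial.coeff x.1 p = 0 := by rw [h]; exact hp
    rw [hc, zero_mul]
  · have hc : MvPolynomial.coeff x.2 r = 0 := by rw [h]; exact hr
    rw [hc, mul_zero]

/-- For `n ≥ 1`: `z^∨_n` has weighted degree at most `n` (where `z_k` has weight `k`),
its constant term is `0`, and the coefficient of the monomial `z_n` equals
`(q+q⁻¹)^n (q^n + q^{-n})`. -/
theorem zvee_degree_constant_and_top_coeff (q : F) (hq0 : q ≠ 0) (h2 : q + q⁻¹ ≠ 0)
    (hqn : ∀ n : ℕ, 1 ≤ n → q ^ n + q⁻¹ ^ n ≠ 0) (n : ℕ) (hn : 1 ≤ n) :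
    (∀ d ∈ (zvee F q n).support, (d.sum fun i m => (i : ℕ) * m) ≤ n) ∧
    MvPolynomial.constantCoeff (zvee F q n) = 0 ∧
    MvPolynomial.coeff (Finsupp.single (⟨n, hn⟩ : ℕ+) 1) (zvee F q n)
      = (q + q⁻¹) ^ n * (q ^ n + q⁻¹ ^ n) := by
  classical
  refine ⟨?_, ?_, ?_⟩
  · -- degree bound
    intro d hd
    rw [zvee] at hd
    have hd1 := MvPolynomial.support_smul hd
    have hd2 := MvPolynomial.support_sum hd1
    simp only [Finset.mem_biUnion, Finset.mem_range] at hd2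
    obtain ⟨k, hk, hdm⟩ := hd2
    have hdm' := MvPolynomial.support_smul hdm
    have hdm'' := MvPolynomial.support_mul _ _ hdm'
    rw [Finset.mem_add] at hdm''
    obtain ⟨u, hu, v, hv, huv⟩ := hdm''
    have hu' := zdown_support F q k u hu
    have hv' := zdown_support F q (n - k) v hv
    rw [← huv, Finsupp.sum_add_index' (fun i => mul_zero _) (fun i m1 m2 => mul_add _ _ _)]
    refine le_trans ?_ (show k + (n - k) ≤ n by omega)
    exact add_le_add hu' hv'
  · -- constant coefficient
    rw [zvee, MvPolynomial.smul_eq_C_mul, map_mul, map_sum, MvPolynomial.constantCoeff_C]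
    have : ∀ k ∈ Finset.range (n + 1),
        MvPolynomial.constantCoeff
          ((q ^ ((n : ℤ) - 2 * (k : ℤ))) • (zdown F q k * zdown F q (n - k))) = 0 := by
      intro k hk
      rw [Finset.mem_range] at hk
      rw [MvPolynomial.smul_eq_C_mul, map_mul, map_mul, MvPolynomial.constantCoeff_C]
      rcases Nat.eq_zero_or_pos k with h0 | hpos
      · subst h0
        rw [Nat.sub_zero, zdown_constantCoeff F q n (by omega)]
        ring
      · rw [zdown_constantCoeff F q k hpos]
        ring
    rw [Finset.sum_congr rfl this]
    simp
  · -- top coefficient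
    show MvPolynomial.coeff (σ := ℕ+) (Finsupp.single (α := ℕ+) ⟨n, hn⟩ 1) (zvee F q n) = _
    rw [zvee, MvPolynomial.coeff_smul, MvPolynomial.coeff_sum]
    simp only [MvPolynomial.coeff_smul]
    set d : ℕ+ →₀ ℕ := Finsupp.single (α := ℕ+) ⟨n, hn⟩ 1 with hd
    have hsub : ({0, n} : Finset ℕ) ⊆ Finset.range (n + 1) := by
      intro x hx
      simp only [Finset.mem_insert, Finset.mem_singleton] at hx
      rcases hx with h | h <;> simp [h, Finset.mem_range] <;> omega
    have hvanish : ∀ x ∈ Finset.range (n + 1), x ∉ ({0, n} : Finset ℕ) →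
        (q ^ ((n : ℤ) - 2 * (x : ℤ))) •
          MvPolynomial.coeff d (zdown F q x * zdown F q (n - x)) = 0 := by
      intro x hx hx'
      rw [Finset.mem_range] at hx
      simp only [Finset.mem_insert, Finset.mem_singleton] at hx'
      push_neg at hx'
      erw [hd, coeff_single_one_mul F _ _ _ (zdown_constantCoeff F q x (by omega))
        (zdown_constantCoeff F q (n - x) (by omega)), smul_zero]
    rw [← Finset.sum_subset hsub hvanish,
      Finset.sum_pair (show (0 : ℕ) ≠ n by omega)]
    have e0 : zdown F q 0 = 1 := rfl
    have c1 : MvPolynomial.coeff d (zdown F q 0 * zdown F q (n - 0)) = 1 := by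
      rw [e0, one_mul, Nat.sub_zero, hd, zdown_top_coeff F q n hn]
    have c2 : MvPolynomial.coeff d (zdown F q n * zdown F q (n - n)) = 1 := by
      rw [Nat.sub_self, e0, mul_one, hd, zdown_top_coeff F q n hn]
    rw [c1, c2]
    have ez1 : (q ^ ((n : ℤ) - 2 * ((0 : ℕ) : ℤ))) = q ^ n := by
      norm_num
    have ez2 : (q ^ ((n : ℤ) - 2 * ((n : ℕ) : ℤ))) = q⁻¹ ^ n := by
      have : (n : ℤ) - 2 * (n : ℤ) = -(n : ℤ) := by ring
      rw [this, zpow_neg, zpow_natCast, inv_pow]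
    rw [ez1, ez2]
    simp [smul_eq_mul, mul_add]
end
end

section
/- Let ∨ : F[z_1,z_2,...] → F[z_1,z_2,...] be the unique algebra homomorphism sending z_n ↦ z^∨_n for n ≥ 1. For every n ∈ ℕ, the image under ∨ of the subspace P_1 + P_2 + ... + P_n equals P_1 + P_2 + ... + P_n, where P_k is the homogeneous component of degree k of the grading with z_k of degree k. -/
noncomputable section

open PowerSeries

variable (F : Type*) [Field F]

/-- The algebra homomorphism `∨` sending `z_n ↦ z^∨_n` for `n ≥ 1`. -/
def veeHom (q : F) : MvPolynomial ℕ+ F →ₐ[F] MvPolynomial ℕ+ F :=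
  MvPolynomial.aeval fun i : ℕ+ => zvee F q (i : ℕ)

namespace VeeAux

open MvPolynomial

/-- The weight of an exponent vector: `z_k` has weight `k`. -/
abbrev Wd (d : ℕ+ →₀ ℕ) : ℕ := Finsupp.weight (fun i : ℕ+ => (i : ℕ)) d

/-- The size (total degree) of an exponent vector. -/
abbrev Sz (d : ℕ+ →₀ ℕ) : ℕ := Finsupp.degree d

lemma Wd_add (d e : ℕ+ →₀ ℕ) : Wd (d + e) = Wd d + Wd e := map_add _ _ _

lemma Sz_add (d e : ℕ+ →₀ ℕ) : Sz (d + e) = Sz d + Sz e := by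
  simp only [Sz, Finsupp.degree_eq_weight_one]
  exact map_add _ _ _

lemma Wd_single (i : ℕ+) (k : ℕ) : Wd (Finsupp.single i k) = k * i := by
  simp [Wd, Finsupp.weight_apply, Finsupp.sum_single_index]

lemma Sz_single (i : ℕ+) (k : ℕ) : Sz (Finsupp.single i k) = k := by
  simp [Sz, Finsupp.degree_eq_weight_one, Finsupp.weight_apply, Finsupp.sum_single_index]

lemma Sz_le_Wd (d : ℕ+ →₀ ℕ) : Sz d ≤ Wd d := by
  rw [Sz, Finsupp.degree, Wd, Finsupp.weight_apply, Finsupp.sum]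
  refine Finset.sum_le_sum fun i _ => ?_
  have : 1 ≤ (i : ℕ) := i.pos
  calc d i = d i * 1 := (mul_one _).symm
    _ ≤ d i * (i : ℕ) := Nat.mul_le_mul_left _ this
    _ = d i • (i : ℕ) := by rw [smul_eq_mul]

lemma Wd_pos {d : ℕ+ →₀ ℕ} (hd : d ≠ 0) : 1 ≤ Wd d := by
  obtain ⟨i, hi⟩ := Finsupp.support_nonempty_iff.mpr hd
  have h1 : d i ≤ Wd d := Finsupp.le_weight _ (by exact_mod_cast i.pos.ne') d
  have h2 : d i ≠ 0 := Finsupp.mem_support_iff.mp hi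
  omega

variable {F}

/-- The submodule of polynomials all of whose monomials have weight in `[1, w]`, and
such that monomials of weight exactly `w` have at least `s` factors. -/
def U (w s : ℕ) : Submodule F (MvPolynomial ℕ+ F) where
  carrier := {p | ∀ e ∈ p.support, (1 ≤ Wd e ∧ Wd e ≤ w) ∧ (Wd e = w → s ≤ Sz e)}
  zero_mem' := by simp
  add_mem' := by
    intro a b ha hb e he
    rcases Finset.mem_union.mp (MvPolynomial.support_add he) with h | h
    exacts [ha e h, hb e h]
  smul_mem' := by
    intro c p hp e he
    exact hp e (MvPolynomial.support_smul he)

lemma mem_U {w s : ℕ} {p : MvPolynomial ℕ+ F} :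
    p ∈ (U w s : Submodule F (MvPolynomial ℕ+ F)) ↔
      ∀ e ∈ p.support, (1 ≤ Wd e ∧ Wd e ≤ w) ∧ (Wd e = w → s ≤ Sz e) := Iff.rfl

lemma U_mono {w s w' s' : ℕ} (hw : w ≤ w') (hs : w' ≤ w → s' ≤ s) :
    (U w s : Submodule F (MvPolynomial ℕ+ F)) ≤ U w' s' := by
  intro p hp e he
  obtain ⟨⟨h1, h2⟩, h3⟩ := hp e he
  refine ⟨⟨h1, h2.trans hw⟩, fun hE => ?_⟩
  have hww : w' ≤ w := hE ▸ h2
  have := h3 (by omega)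
  exact (hs hww).trans this

lemma monomial_mem_U {w s : ℕ} {e : ℕ+ →₀ ℕ} (c : F)
    (h1 : 1 ≤ Wd e) (h2 : Wd e ≤ w) (h3 : Wd e = w → s ≤ Sz e) :
    (monomial e c : MvPolynomial ℕ+ F) ∈ (U w s : Submodule F (MvPolynomial ℕ+ F)) := by
  intro e' he'
  have : e' = e := Finset.mem_singleton.mp (MvPolynomial.support_monomial_subset he')
  subst this
  exact ⟨⟨h1, h2⟩, h3⟩

lemma mul_mem_U {w s w' s' : ℕ} {p p' : MvPolynomial ℕ+ F}
    (hp : p ∈ (U w s : Submodule F (MvPolynomial ℕ+ F)))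
    (hp' : p' ∈ (U w' s' : Submodule F (MvPolynomial ℕ+ F))) :
    p * p' ∈ (U (w + w') (s + s') : Submodule F (MvPolynomial ℕ+ F)) := by
  intro e he
  have := MvPolynomial.support_mul p p' he
  rw [Finset.mem_add] at this
  obtain ⟨e1, h1, e2, h2, rfl⟩ := this
  obtain ⟨⟨h11, h12⟩, h13⟩ := hp e1 h1
  obtain ⟨⟨h21, h22⟩, h23⟩ := hp' e2 h2
  rw [Wd_add, Sz_add]
  refine ⟨⟨by omega, by omega⟩, fun hE => ?_⟩
  have hE1 : Wd e1 = w := by omega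
  have hE2 : Wd e2 = w' := by omega
  exact Nat.add_le_add (h13 hE1) (h23 hE2)

lemma z_eq (m : ℕ) (hm : 0 < m) :
    z F m = monomial ((Finsupp.single (⟨m, hm⟩ : ℕ+) 1 : ℕ+ →₀ ℕ)) (1 : F) := by
  cases m with
  | zero => omega
  | succ n => rfl

lemma z_coe (a : ℕ+) : z F (a : ℕ) = monomial ((Finsupp.single a 1 : ℕ+ →₀ ℕ)) (1 : F) := by
  obtain ⟨n, hn⟩ := a
  cases n with
  | zero => exact absurd hn (lt_irrefl 0)
  | succ k => rfl

lemma z_mem_U {m w s : ℕ} (h1 : 1 ≤ m) (h2 : m ≤ w) (h3 : m = w → s ≤ 1) :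
    z F m ∈ (U w s : Submodule F (MvPolynomial ℕ+ F)) := by
  rw [z_eq (F := F) m h1]
  refine monomial_mem_U _ ?_ ?_ ?_ <;> erw [Wd_single, one_mul]
  · exact h1
  · exact h2
  · erw [Sz_single]; exact fun hE => h3 hE

variable (q : F)

lemma zdown_mem_U {k : ℕ} (hk : 1 ≤ k) :
    zdown F q k ∈ (U k 1 : Submodule F (MvPolynomial ℕ+ F)) := by
  obtain ⟨n, rfl⟩ : ∃ n, k = n + 1 := ⟨k - 1, by omega⟩
  rw [zdown]
  refine Submodule.sum_mem _ fun ℓ hℓ => Submodule.smul_mem _ _ ?_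
  have hℓ' : ℓ ≤ n / 2 := by
    have := Finset.mem_range.mp hℓ; omega
  exact z_mem_U (by omega) (by omega) (by omega)

lemma zdown_sub_mem_U (n : ℕ) :
    zdown F q (n + 1) - z F (n + 1) ∈ (U (n + 1) 2 : Submodule F (MvPolynomial ℕ+ F)) := by
  rw [zdown, Finset.sum_range_succ']
  have h0 : ((-1 : F) ^ 0 * (Nat.choose (n - 0) 0 : F) * ((q + q⁻¹)⁻¹) ^ (2 * 0)) •
      z F (n + 1 - 2 * 0) = z F (n + 1) := by
    simp
  rw [h0, add_sub_cancel_right]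
  refine Submodule.sum_mem _ fun ℓ hℓ => Submodule.smul_mem _ _ ?_
  have hℓ' : ℓ < n / 2 := Finset.mem_range.mp hℓ
  exact z_mem_U (by omega) (by omega) (by omega)

/-- The leading coefficient of `z^∨_m`. -/
def cf (m : ℕ) : F := (q + q⁻¹) ^ m * (q ^ m + (q ^ m)⁻¹)

section hq

variable (hq0 : q ≠ 0) (hq : ∀ n : ℕ, 0 < n → q ^ n ≠ 1)

lemma aux_ne_zero (x : F) (hx : x ≠ 0) (hx4 : x ^ 4 ≠ 1) : x + x⁻¹ ≠ 0 := by
  intro h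
  apply hx4
  have h2 : x * x = -1 := by
    have := congrArg (· * x) h
    simp only [add_mul, zero_mul, inv_mul_cancel₀ hx] at this
    linear_combination this
  calc x ^ 4 = (x * x) * (x * x) := by ring
    _ = 1 := by rw [h2]; ring

include hq0 hq in
lemma q_pow_add_ne_zero {m : ℕ} (hm : 1 ≤ m) : q ^ m + (q ^ m)⁻¹ ≠ 0 := by
  refine aux_ne_zero _ (pow_ne_zero _ hq0) ?_
  rw [← pow_mul]
  exact hq (m * 4) (by omega)

include hq0 hq in
lemma two_q_ne_zero : q + q⁻¹ ≠ 0 := by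
  have := q_pow_add_ne_zero q hq0 hq (m := 1) le_rfl
  simpa using this

include hq0 hq in
lemma cf_ne_zero {m : ℕ} (hm : 1 ≤ m) : cf q m ≠ 0 :=
  mul_ne_zero (pow_ne_zero _ (two_q_ne_zero q hq0 hq)) (q_pow_add_ne_zero q hq0 hq hm)

end hq

lemma zvee_decomp (hq0 : q ≠ 0) {m : ℕ} (hm : 1 ≤ m) :
    ∃ r ∈ (U m 2 : Submodule F (MvPolynomial ℕ+ F)),
      zvee F q m = cf q m • z F m + r := by
  classical
  set f : ℕ → MvPolynomial ℕ+ F :=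
    fun k => (q ^ ((m : ℤ) - 2 * (k : ℤ))) • (zdown F q k * zdown F q (m - k)) with hf
  have h0mem : (0 : ℕ) ∈ Finset.range (m + 1) := Finset.mem_range.mpr (by omega)
  have hmmem : m ∈ (Finset.range (m + 1)).erase 0 :=
    Finset.mem_erase.mpr ⟨by omega, Finset.mem_range.mpr (by omega)⟩
  have hsum : ∑ k ∈ Finset.range (m + 1), f k =
      f 0 + (f m + ∑ k ∈ ((Finset.range (m + 1)).erase 0).erase m, f k) := by
    rw [Finset.add_sum_erase _ f hmmem, Finset.add_sum_erase _ f h0mem]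
  have hf0 : f 0 = (q ^ m) • zdown F q m := by
    simp only [hf, Nat.cast_zero, mul_zero, sub_zero, Nat.sub_zero, zpow_natCast]
    rw [show zdown F q 0 = 1 from rfl, one_mul]
  have hfm : f m = (q ^ m)⁻¹ • zdown F q m := by
    simp only [hf, Nat.sub_self]
    rw [show zdown F q 0 = 1 from rfl, mul_one]
    congr 1
    rw [show (m : ℤ) - 2 * (m : ℤ) = -(m : ℤ) by ring, zpow_neg, zpow_natCast]
  have hmid : ∑ k ∈ ((Finset.range (m + 1)).erase 0).erase m, f k ∈
      (U m 2 : Submodule F (MvPolynomial ℕ+ F)) := by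
    refine Submodule.sum_mem _ fun k hk => ?_
    have hk1 : k ≠ m := (Finset.mem_erase.mp hk).1
    have hk2 : k ≠ 0 := (Finset.mem_erase.mp (Finset.mem_erase.mp hk).2).1
    have hk3 : k < m + 1 := Finset.mem_range.mp (Finset.mem_erase.mp (Finset.mem_erase.mp hk).2).2
    refine Submodule.smul_mem _ _ ?_
    have := mul_mem_U (zdown_mem_U q (k := k) (by omega))
      (zdown_mem_U q (k := m - k) (by omega))
    have hkm : k + (m - k) = m := by omega
    rw [hkm] at this
    exact this
  -- decompose zdown m
  have hzd : zdown F q m = z F m + (zdown F q m - z F m) := by ring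
  obtain ⟨n, rfl⟩ : ∃ n, m = n + 1 := ⟨m - 1, by omega⟩
  set rz := zdown F q (n + 1) - z F (n + 1) with hrz
  have hrzmem : rz ∈ (U (n + 1) 2 : Submodule F (MvPolynomial ℕ+ F)) :=
    zdown_sub_mem_U q n
  refine ⟨((q + q⁻¹) ^ (n + 1)) • ((q ^ (n + 1) + (q ^ (n + 1))⁻¹) • rz +
      ∑ k ∈ ((Finset.range (n + 1 + 1)).erase 0).erase (n + 1), f k), ?_, ?_⟩
  · exact Submodule.smul_mem _ _ (Submodule.add_mem _ (Submodule.smul_mem _ _ hrzmem) hmid)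
  · rw [zvee, hsum, hf0, hfm, cf]
    rw [hzd]
    module

lemma zvee_mem_U (hq0 : q ≠ 0) {m : ℕ} (hm : 1 ≤ m) :
    zvee F q m ∈ (U m 1 : Submodule F (MvPolynomial ℕ+ F)) := by
  obtain ⟨r, hr, hzv⟩ := zvee_decomp q hq0 hm
  rw [hzv]
  exact Submodule.add_mem _
    (Submodule.smul_mem _ _ (z_mem_U hm le_rfl (fun _ => le_rfl)))
    (U_mono le_rfl (fun _ => by omega) hr)

lemma pow_decomp (hq0 : q ≠ 0) (a : ℕ+) :
    ∀ b : ℕ, 1 ≤ b →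
    ∃ r ∈ (U (b * a) (b + 1) : Submodule F (MvPolynomial ℕ+ F)),
      zvee F q a ^ b = ((cf q a) ^ b) • monomial ((Finsupp.single a b : ℕ+ →₀ ℕ)) (1 : F) + r := by
  intro b
  induction b with
  | zero => omega
  | succ b IH =>
    intro _
    rcases Nat.eq_or_lt_of_le (Nat.one_le_iff_ne_zero.mpr (Nat.succ_ne_zero b)) with hb1 | hb1
    · -- b + 1 = 1
      obtain rfl : b = 0 := by omega
      obtain ⟨r, hr, hzv⟩ := zvee_decomp q hq0 (m := a) a.pos
      refine ⟨r, ?_, ?_⟩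
      · have : (a : ℕ) = 1 * a := (one_mul _).symm
        exact U_mono (by omega) (fun _ => le_rfl) hr
      · rw [pow_one, pow_one, hzv, z_coe]
  -- b ≥ 1 case
    · have hb : 1 ≤ b := by omega
      obtain ⟨rb, hrb, hpow⟩ := IH hb
      obtain ⟨r1, hr1, hzv⟩ := zvee_decomp q hq0 (m := a) a.pos
      have hza : z F a = monomial ((Finsupp.single a 1 : ℕ+ →₀ ℕ)) (1 : F) := z_coe a
      have hMb : (monomial ((Finsupp.single a b : ℕ+ →₀ ℕ)) (1 : F) : MvPolynomial ℕ+ F) ∈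
          (U (b * a) b : Submodule F (MvPolynomial ℕ+ F)) := by
        have hW : Wd (Finsupp.single a b : ℕ+ →₀ ℕ) = b * a := Wd_single a b
        have hS : Sz (Finsupp.single a b : ℕ+ →₀ ℕ) = b := Sz_single a b
        refine monomial_mem_U _ ?_ (le_of_eq hW) (fun _ => hS.ge)
        rw [hW]
        exact Nat.one_le_iff_ne_zero.mpr (Nat.mul_ne_zero (by omega) a.pos.ne')
      refine ⟨(cf q a ^ b) • (monomial ((Finsupp.single a b : ℕ+ →₀ ℕ)) (1 : F) * r1) +
          rb * zvee F q a, ?_, ?_⟩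
      · refine Submodule.add_mem _ (Submodule.smul_mem _ _ ?_) ?_
        · have := mul_mem_U hMb hr1
          refine U_mono (by rw [Nat.succ_mul]) (fun _ => by omega) this
        · have := mul_mem_U hrb (zvee_mem_U q hq0 (m := a) a.pos)
          refine U_mono (by rw [Nat.succ_mul]) (fun _ => by omega) this
      · rw [pow_succ, hpow, hzv, hza]
        rw [add_mul, mul_add, mul_add]
        have hmm : (monomial ((Finsupp.single a b : ℕ+ →₀ ℕ)) (1 : F) : MvPolynomial ℕ+ F) *
            monomial ((Finsupp.single a 1 : ℕ+ →₀ ℕ)) (1 : F) =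
            monomial ((Finsupp.single a (b + 1) : ℕ+ →₀ ℕ)) (1 : F) := by
          rw [MvPolynomial.monomial_mul, one_mul]
          congr 1
          rw [← Finsupp.single_add]
        have : (cf q a ^ b) • (monomial ((Finsupp.single a b : ℕ+ →₀ ℕ)) (1 : F) : MvPolynomial ℕ+ F) *
            (cf q a • monomial ((Finsupp.single a 1 : ℕ+ →₀ ℕ)) (1 : F)) =
            (cf q a ^ (b + 1)) • monomial ((Finsupp.single a (b + 1) : ℕ+ →₀ ℕ)) (1 : F) := by
          rw [smul_mul_smul_comm, hmm, ← pow_succ]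
        rw [this, smul_mul_assoc]
        ring

lemma prod_decomp (hq0 : q ≠ 0) (d : ℕ+ →₀ ℕ) (hd : d ≠ 0) :
    ∃ r ∈ (U (Wd d) (Sz d + 1) : Submodule F (MvPolynomial ℕ+ F)),
      (d.prod fun i k => zvee F q i ^ k) =
        (d.prod fun i k => (cf q i) ^ k) • monomial d (1 : F) + r := by
  classical
  induction d using Finsupp.induction with
  | zero => exact absurd rfl hd
  | single_add a b f haf hb IH =>
    rcases eq_or_ne f 0 with rfl | hf
    · -- d = single a b
      simp only [add_zero]
      have hb1 : 1 ≤ b := Nat.one_le_iff_ne_zero.mpr hb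
      obtain ⟨r, hr, hpow⟩ := pow_decomp q hq0 a b hb1
      refine ⟨r, ?_, ?_⟩
      · rw [Wd_single, Sz_single]; exact hr
      · rw [Finsupp.prod_single_index (by simp), Finsupp.prod_single_index (by simp), hpow]
    · -- f ≠ 0
      obtain ⟨rf, hrf, hprodf⟩ := IH hf
      have hb1 : 1 ≤ b := Nat.one_le_iff_ne_zero.mpr hb
      obtain ⟨rb, hrb, hpow⟩ := pow_decomp q hq0 a b hb1
      have hprod1 : ((Finsupp.single a b + f).prod fun i k => zvee F q (i : ℕ) ^ k) =
          zvee F q a ^ b * f.prod fun i k => zvee F q (i : ℕ) ^ k := by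
        rw [Finsupp.prod_add_index (by intros; simp) (by intros; rw [pow_add]),
          Finsupp.prod_single_index (by simp)]
      have hprod2 : ((Finsupp.single a b + f).prod fun i k => (cf q i) ^ k) =
          (cf q a) ^ b * f.prod fun i k => (cf q i) ^ k := by
        rw [Finsupp.prod_add_index (by intros; simp) (by intros; rw [pow_add]),
          Finsupp.prod_single_index (by simp)]
      set Cf := f.prod fun i k => (cf q i) ^ k with hCf
      have hWd : Wd (Finsupp.single a b + f) = b * a + Wd f := by
        rw [Wd_add, Wd_single]
      have hSz : Sz (Finsupp.single a b + f) = b + Sz f := by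
        rw [Sz_add, Sz_single]
      have hMb : (monomial ((Finsupp.single a b : ℕ+ →₀ ℕ)) (1 : F) : MvPolynomial ℕ+ F) ∈
          (U (b * a) b : Submodule F (MvPolynomial ℕ+ F)) := by
        have hW : Wd (Finsupp.single a b : ℕ+ →₀ ℕ) = b * a := Wd_single a b
        have hS : Sz (Finsupp.single a b : ℕ+ →₀ ℕ) = b := Sz_single a b
        refine monomial_mem_U _ ?_ (le_of_eq hW) (fun _ => hS.ge)
        rw [hW]
        exact Nat.one_le_iff_ne_zero.mpr (Nat.mul_ne_zero (by omega) a.pos.ne')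
      have hMf : (monomial f (1 : F) : MvPolynomial ℕ+ F) ∈
          (U (Wd f) (Sz f) : Submodule F (MvPolynomial ℕ+ F)) :=
        monomial_mem_U _ (Wd_pos hf) le_rfl (fun _ => le_rfl)
      have hfprodmem : (f.prod fun i k => zvee F q (i : ℕ) ^ k) ∈
          (U (Wd f) (Sz f) : Submodule F (MvPolynomial ℕ+ F)) := by
        rw [hprodf]
        exact Submodule.add_mem _ (Submodule.smul_mem _ _ hMf)
          (U_mono le_rfl (fun _ => by omega) hrf)
      refine ⟨(cf q a ^ b) • (monomial ((Finsupp.single a b : ℕ+ →₀ ℕ)) (1 : F) * rf) +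
          rb * (f.prod fun i k => zvee F q (i : ℕ) ^ k), ?_, ?_⟩
      · refine Submodule.add_mem _ (Submodule.smul_mem _ _ ?_) ?_
        · have := mul_mem_U hMb hrf
          rw [hWd, hSz]
          exact U_mono le_rfl (fun _ => by omega) this
        · have := mul_mem_U hrb hfprodmem
          rw [hWd, hSz]
          exact U_mono le_rfl (fun _ => by omega) this
      · rw [hprod1, hprod2, hpow, hprodf]
        have hmm : (monomial ((Finsupp.single a b : ℕ+ →₀ ℕ)) (1 : F) : MvPolynomial ℕ+ F) *
            monomial f (1 : F) = monomial ((Finsupp.single a b + f : ℕ+ →₀ ℕ)) (1 : F) := by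
          rw [MvPolynomial.monomial_mul, one_mul]
        have key : (cf q a ^ b) • (monomial ((Finsupp.single a b : ℕ+ →₀ ℕ)) (1 : F) : MvPolynomial ℕ+ F) *
            (Cf • monomial f (1 : F)) =
            (cf q a ^ b * Cf) • monomial ((Finsupp.single a b + f : ℕ+ →₀ ℕ)) (1 : F) := by
          rw [smul_mul_smul_comm, hmm]
        rw [add_mul, mul_add, mul_add, key, smul_mul_assoc]
        ring

lemma prod_mem_U (hq0 : q ≠ 0) (d : ℕ+ →₀ ℕ) (hd : d ≠ 0) :
    (d.prod fun i k => zvee F q i ^ k) ∈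
      (U (Wd d) (Sz d) : Submodule F (MvPolynomial ℕ+ F)) := by
  obtain ⟨r, hr, hp⟩ := prod_decomp q hq0 d hd
  rw [hp]
  exact Submodule.add_mem _
    (Submodule.smul_mem _ _ (monomial_mem_U _ (Wd_pos hd) le_rfl (fun _ => le_rfl)))
    (U_mono le_rfl (fun _ => by omega) hr)

/-- Sum of submodules is bounded by any common upper bound. -/
lemma sum_le_of_forall_le {ι : Type*} (s : Finset ι) (M : ι → Submodule F (MvPolynomial ℕ+ F))
    (N : Submodule F (MvPolynomial ℕ+ F)) (h : ∀ i ∈ s, M i ≤ N) :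
    (∑ i ∈ s, M i) ≤ N := by
  classical
  induction s using Finset.induction_on with
  | empty => simp
  | insert _ _ hni IH =>
    rename_i a s'
    rw [Finset.sum_insert hni, Submodule.add_eq_sup]
    exact sup_le (h a (Finset.mem_insert_self a s'))
      (IH fun i hi => h i (Finset.mem_insert_of_mem hi))

/-- The sum of the homogeneous components of degrees `1, …, n` is exactly `U n 0`. -/
lemma sum_components_eq (n : ℕ) :
    (∑ k ∈ Finset.Icc 1 n,
      MvPolynomial.weightedHomogeneousSubmodule F (fun i : ℕ+ => (i : ℕ)) k)
      = (U n 0 : Submodule F (MvPolynomial ℕ+ F)) := by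
  apply le_antisymm
  · refine sum_le_of_forall_le _ _ _ fun k hk => ?_
    obtain ⟨hk1, hk2⟩ := Finset.mem_Icc.mp hk
    intro p hp e he
    have : Wd e = k := hp (MvPolynomial.mem_support_iff.mp he)
    exact ⟨⟨by omega, by omega⟩, fun _ => Nat.zero_le _⟩
  · intro p hp
    rw [MvPolynomial.as_sum p]
    refine Submodule.sum_mem _ fun e he => ?_
    obtain ⟨⟨h1, h2⟩, _⟩ := hp e he
    have hmem : (monomial e (MvPolynomial.coeff e p) : MvPolynomial ℕ+ F) ∈
        MvPolynomial.weightedHomogeneousSubmodule F (fun i : ℕ+ => (i : ℕ)) (Wd e) :=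
      MvPolynomial.isWeightedHomogeneous_monomial _ _ _ rfl
    have hle : MvPolynomial.weightedHomogeneousSubmodule F (fun i : ℕ+ => (i : ℕ)) (Wd e) ≤
        ∑ k ∈ Finset.Icc 1 n,
          MvPolynomial.weightedHomogeneousSubmodule F (fun i : ℕ+ => (i : ℕ)) k := by
      refine Finset.single_le_sum (f := fun k =>
        MvPolynomial.weightedHomogeneousSubmodule F (fun i : ℕ+ => (i : ℕ)) k)
        (fun i _ => bot_le) ?_
      exact Finset.mem_Icc.mpr ⟨h1, h2⟩
    exact hle hmem

end VeeAux

/-- For every `n`, the image under `∨` of `P_1 + ⋯ + P_n` equals `P_1 + ⋯ + P_n`, where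
`P_k` is the homogeneous component of degree `k` (with `z_k` of degree `k`). -/
theorem veeHom_map_sum_components (q : F) (hq0 : q ≠ 0)
    (hq : ∀ n : ℕ, 0 < n → q ^ n ≠ 1) (n : ℕ) :
    Submodule.map (veeHom F q).toLinearMap
        (∑ k ∈ Finset.Icc 1 n,
          MvPolynomial.weightedHomogeneousSubmodule F (fun i : ℕ+ => (i : ℕ)) k)
      = ∑ k ∈ Finset.Icc 1 n,
          MvPolynomial.weightedHomogeneousSubmodule F (fun i : ℕ+ => (i : ℕ)) k := by
  classical
  rw [VeeAux.sum_components_eq]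
  set S : Submodule F (MvPolynomial ℕ+ F) := VeeAux.U n 0 with hS
  apply le_antisymm
  · -- easy direction: the image is contained in S
    rw [Submodule.map_le_iff_le_comap]
    intro p hp
    simp only [Submodule.mem_comap, AlgHom.toLinearMap_apply]
    rw [MvPolynomial.as_sum p, map_sum]
    refine Submodule.sum_mem _ fun e he => ?_
    obtain ⟨⟨h1, h2⟩, _⟩ := hp e he
    have hd0 : e ≠ 0 := by
      intro h; rw [h] at h1; simp [VeeAux.Wd] at h1
    rw [veeHom, MvPolynomial.aeval_monomial]
    have hprod := VeeAux.prod_mem_U q hq0 e hd0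
    have hle : (VeeAux.U (VeeAux.Wd e) (VeeAux.Sz e) : Submodule F (MvPolynomial ℕ+ F)) ≤ S :=
      VeeAux.U_mono h2 (fun _ => Nat.zero_le _)
    have : (algebraMap F (MvPolynomial ℕ+ F)) (MvPolynomial.coeff e p) *
        (e.prod fun i k => zvee F q (i : ℕ) ^ k) =
        (MvPolynomial.coeff e p) • (e.prod fun i k => zvee F q (i : ℕ) ^ k) := by
      rw [MvPolynomial.algebraMap_eq, MvPolynomial.smul_eq_C_mul]
    rw [this]
    exact Submodule.smul_mem _ _ (hle hprod)
  · -- hard direction: S is contained in the image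
    have key : ∀ N : ℕ, ∀ (d : ℕ+ →₀ ℕ) (c : F), 1 ≤ VeeAux.Wd d → VeeAux.Wd d ≤ n →
        (n + 2) * VeeAux.Wd d - VeeAux.Sz d ≤ N →
        (MvPolynomial.monomial d c : MvPolynomial ℕ+ F) ∈
          Submodule.map (veeHom F q).toLinearMap S := by
      intro N
      induction N using Nat.strong_induction_on with
      | _ N IH =>
        intro d c h1 h2 h3
        have hd0 : d ≠ 0 := by
          intro h; rw [h] at h1; simp [VeeAux.Wd] at h1
        obtain ⟨r, hr, hprod⟩ := VeeAux.prod_decomp q hq0 d hd0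
        set Cd : F := d.prod fun i k => (VeeAux.cf q i) ^ k with hCd
        have hCd0 : Cd ≠ 0 := by
          rw [hCd, Finsupp.prod]
          refine Finset.prod_ne_zero_iff.mpr fun i _ => ?_
          exact pow_ne_zero _ (VeeAux.cf_ne_zero q hq0 hq i.pos)
        -- the image of `monomial d 1` lies in the image of S
        have hm1 : (MvPolynomial.monomial d (1 : F) : MvPolynomial ℕ+ F) ∈ S :=
          VeeAux.monomial_mem_U _ h1 h2 (fun _ => Nat.zero_le _)
        have hprodmem : (d.prod fun i k => zvee F q (i : ℕ) ^ k) ∈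
            Submodule.map (veeHom F q).toLinearMap S := by
          refine ⟨MvPolynomial.monomial d 1, hm1, ?_⟩
          rw [AlgHom.toLinearMap_apply, veeHom, MvPolynomial.aeval_monomial, map_one, one_mul]
        -- r lies in the image of S by induction
        have hrmem : r ∈ Submodule.map (veeHom F q).toLinearMap S := by
          rw [MvPolynomial.as_sum r]
          refine Submodule.sum_mem _ fun e he => ?_
          obtain ⟨⟨he1, he2⟩, he3⟩ := hr e he
          have hWed : VeeAux.Wd e ≤ VeeAux.Wd d := he2
          have hSzd : VeeAux.Sz d ≤ VeeAux.Wd d := VeeAux.Sz_le_Wd d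
          have hSze : VeeAux.Sz e ≤ VeeAux.Wd e := VeeAux.Sz_le_Wd e
          have hWd_le : VeeAux.Wd d ≤ (n + 2) * VeeAux.Wd d :=
            Nat.le_mul_of_pos_left _ (by omega)
          have hlt : (n + 2) * VeeAux.Wd e - VeeAux.Sz e < N := by
            rcases Nat.lt_or_ge (VeeAux.Wd e) (VeeAux.Wd d) with hlt' | hge
            · have hmul : (n + 2) * (VeeAux.Wd e + 1) ≤ (n + 2) * VeeAux.Wd d :=
                Nat.mul_le_mul_left _ (by omega)
              rw [Nat.mul_add, Nat.mul_one] at hmul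
              omega
            · have heq : VeeAux.Wd e = VeeAux.Wd d := by omega
              have := he3 heq
              rw [heq]
              omega
          exact IH _ hlt e _ he1 (by omega) le_rfl
        -- conclude
        have heq : (MvPolynomial.monomial d c : MvPolynomial ℕ+ F) =
            (c * Cd⁻¹) • ((d.prod fun i k => zvee F q (i : ℕ) ^ k) - r) := by
          rw [hprod, add_sub_cancel_right, smul_smul, mul_assoc, inv_mul_cancel₀ hCd0, mul_one]
          rw [MvPolynomial.smul_monomial, smul_eq_mul, mul_one]
        rw [heq]
        exact Submodule.smul_mem _ _ (Submodule.sub_mem _ hprodmem hrmem)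
    intro p hp
    rw [MvPolynomial.as_sum p]
    refine Submodule.sum_mem _ fun e he => ?_
    obtain ⟨⟨h1, h2⟩, _⟩ := hp e he
    exact key _ e _ h1 h2 le_rfl
end
end

section
/- In F[z_1,z_2,...] the following four sets coincide: (i) the kernel of the algebra homomorphism θ: F[z_1,z_2,...] → F sending z_n ↦ 0 for all n ≥ 1; (ii) the sum ∑_{n≥1} P_n of the positive-degree homogeneous components; (iii) the ideal generated by {z_n}_{n≥1}; (iv) the ideal generated by {z^∨_n}_{n≥1}. -/
noncomputable section

open PowerSeries

variable (F : Type*) [Field F]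

/-- The evaluation homomorphism `θ : F[z_1,z_2,…] → F` sending `z_n ↦ 0` for all `n ≥ 1`. -/
def thetaHom : MvPolynomial ℕ+ F →ₐ[F] F :=
  MvPolynomial.aeval fun _ : ℕ+ => (0 : F)

open MvPolynomial

variable {F}

lemma theta_apply (p : MvPolynomial ℕ+ F) : thetaHom F p = constantCoeff p := by
  simp [thetaHom]

lemma theta_ring (p : MvPolynomial ℕ+ F) : (thetaHom F).toRingHom p = constantCoeff p :=
  theta_apply p

lemma mem_ker_theta {p : MvPolynomial ℕ+ F} :
    p ∈ RingHom.ker (thetaHom F).toRingHom ↔ constantCoeff p = 0 := by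
  rw [RingHom.mem_ker]; exact ⟨fun h => by rwa [← theta_apply], fun h => by
    show thetaHom F p = 0; rwa [theta_apply]⟩

lemma z_pnat (i : ℕ+) : z F (i : ℕ) = X i := by
  obtain ⟨n, hn⟩ := i
  cases n with
  | zero => exact absurd hn (lt_irrefl 0)
  | succ t => rfl

lemma zdown_succ (q : F) (n : ℕ) : zdown F q (n + 1) = ∑ ℓ ∈ Finset.range (n / 2 + 1),
      ((-1 : F) ^ ℓ * (Nat.choose (n - ℓ) ℓ : F) * ((q + q⁻¹)⁻¹) ^ (2 * ℓ)) •
        z F (n + 1 - 2 * ℓ) := rfl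

lemma zdown_zero (q : F) : zdown F q 0 = 1 := rfl

lemma zdown_mem {q : F} {I : Ideal (MvPolynomial ℕ+ F)} {k : ℕ} (hk : 1 ≤ k)
    (h : ∀ j, 1 ≤ j → j ≤ k → z F j ∈ I) : zdown F q k ∈ I := by
  obtain ⟨t, rfl⟩ := Nat.exists_eq_add_of_le hk
  rw [Nat.add_comm 1 t, zdown_succ]
  refine Ideal.sum_mem _ fun ℓ hℓ => ?_
  rw [Finset.mem_range] at hℓ
  rw [MvPolynomial.smul_eq_C_mul]
  refine Ideal.mul_mem_left _ _ (h _ ?_ ?_) <;> omega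

lemma z_mem_spanX {j : ℕ} (hj : 1 ≤ j) :
    z F j ∈ Ideal.span (Set.range (MvPolynomial.X : ℕ+ → MvPolynomial ℕ+ F)) := by
  obtain ⟨t, rfl⟩ := Nat.exists_eq_add_of_le hj
  rw [Nat.add_comm 1 t]
  exact Ideal.subset_span ⟨⟨t + 1, Nat.succ_pos t⟩, rfl⟩

lemma zvee_mem_spanX {q : F} {m : ℕ} (hm : 1 ≤ m) :
    zvee F q m ∈ Ideal.span (Set.range (MvPolynomial.X : ℕ+ → MvPolynomial ℕ+ F)) := by
  rw [zvee, MvPolynomial.smul_eq_C_mul]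
  refine Ideal.mul_mem_left _ _ (Ideal.sum_mem _ fun k hk => ?_)
  rw [Finset.mem_range] at hk
  rw [MvPolynomial.smul_eq_C_mul]
  refine Ideal.mul_mem_left _ _ ?_
  rcases Nat.eq_zero_or_pos k with rfl | hkpos
  · exact Ideal.mul_mem_left _ _ (zdown_mem (by omega) fun j h1 h2 => z_mem_spanX h1)
  · exact Ideal.mul_mem_right _ _ (zdown_mem hkpos fun j h1 h2 => z_mem_spanX h1)

lemma aux_ne {a : F} (ha : a ≠ 0) (h4 : a ^ 4 ≠ 1) : a + a⁻¹ ≠ 0 := by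
  intro h
  apply h4
  have h2 : a ^ 2 = -1 := by
    field_simp at h
    linear_combination h
  calc a ^ 4 = (a ^ 2) ^ 2 := by ring
  _ = 1 := by rw [h2]; ring

lemma z_mem_spanZvee (q : F) (hq0 : q ≠ 0) (hq : ∀ n : ℕ, 0 < n → q ^ n ≠ 1) :
    ∀ m j, 1 ≤ j → j ≤ m → z F j ∈ Ideal.span (Set.range fun i : ℕ+ => zvee F q (i : ℕ)) := by
  intro m
  induction m with
  | zero => intro j h1 h2; omega
  | succ m IH =>
    intro j h1 h2
    rcases Nat.lt_or_ge j (m + 1) with h | h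
    · exact IH j h1 (by omega)
    have hj : j = m + 1 := by omega
    subst hj
    set I := Ideal.span (Set.range fun i : ℕ+ => zvee F q (i : ℕ)) with hI
    have hv : zvee F q (m + 1) ∈ I := Ideal.subset_span ⟨⟨m + 1, Nat.succ_pos m⟩, rfl⟩
    set S : MvPolynomial ℕ+ F := ∑ i ∈ Finset.range m,
        (q ^ (((m + 1 : ℕ) : ℤ) - 2 * ((i + 1 : ℕ) : ℤ))) •
          (zdown F q (i + 1) * zdown F q (m + 1 - (i + 1))) with hS
    have hSmem : S ∈ I := by
      refine Ideal.sum_mem _ fun k hk => ?_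
      rw [Finset.mem_range] at hk
      rw [MvPolynomial.smul_eq_C_mul]
      refine Ideal.mul_mem_left _ _ (Ideal.mul_mem_right _ _ ?_)
      exact zdown_mem (by omega) fun i hi1 hi2 => IH i hi1 (by omega)
    set c : F := (q + q⁻¹) ^ (m + 1) * (q ^ ((m + 1 : ℕ) : ℤ) + q ^ (-((m + 1 : ℕ) : ℤ))) with hc
    have key : zvee F q (m + 1) = c • zdown F q (m + 1) + ((q + q⁻¹) ^ (m + 1)) • S := by
      rw [zvee, Finset.sum_range_succ, Finset.sum_range_succ']
      have he : ((m + 1 : ℕ) : ℤ) - 2 * ((m + 1 : ℕ) : ℤ) = -((m + 1 : ℕ) : ℤ) := by ring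
      simp only [Nat.cast_zero, mul_zero, sub_zero, Nat.sub_zero, Nat.sub_self, zdown_zero,
        one_mul, mul_one, he, hc, hS]
      module
    have hcz : c • zdown F q (m + 1) ∈ I := by
      have h2 : c • zdown F q (m + 1) = zvee F q (m + 1) - ((q + q⁻¹) ^ (m + 1)) • S := by
        rw [key]; abel
      rw [h2]
      refine Ideal.sub_mem _ hv ?_
      rw [MvPolynomial.smul_eq_C_mul]
      exact Ideal.mul_mem_left _ _ hSmem
    have hcne : c ≠ 0 := by
      apply mul_ne_zero
      · exact pow_ne_zero _ (aux_ne hq0 (hq 4 (by norm_num)))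
      · have e1 : q ^ ((m + 1 : ℕ) : ℤ) = q ^ (m + 1) := zpow_natCast q (m + 1)
        have e2 : q ^ (-((m + 1 : ℕ) : ℤ)) = (q ^ (m + 1))⁻¹ := by
          rw [zpow_neg, zpow_natCast]
        rw [e1, e2]
        refine aux_ne (pow_ne_zero _ hq0) ?_
        rw [← pow_mul]
        exact hq _ (by positivity)
    have hzd : zdown F q (m + 1) ∈ I := by
      have h3 := inv_smul_smul₀ hcne (zdown F q (m + 1))
      rw [← h3, MvPolynomial.smul_eq_C_mul]
      exact Ideal.mul_mem_left _ _ hcz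
    have hsplit : zdown F q (m + 1) = (∑ ℓ ∈ Finset.range (m / 2),
        ((-1 : F) ^ (ℓ + 1) * (Nat.choose (m - (ℓ + 1)) (ℓ + 1) : F) *
          ((q + q⁻¹)⁻¹) ^ (2 * (ℓ + 1))) • z F (m + 1 - 2 * (ℓ + 1))) + z F (m + 1) := by
      rw [zdown_succ, Finset.sum_range_succ']
      simp
    have h4 : z F (m + 1) = zdown F q (m + 1) - ∑ ℓ ∈ Finset.range (m / 2),
        ((-1 : F) ^ (ℓ + 1) * (Nat.choose (m - (ℓ + 1)) (ℓ + 1) : F) *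
          ((q + q⁻¹)⁻¹) ^ (2 * (ℓ + 1))) • z F (m + 1 - 2 * (ℓ + 1)) := by
      rw [hsplit]; abel
    rw [h4]
    refine Ideal.sub_mem _ hzd (Ideal.sum_mem _ fun ℓ hℓ => ?_)
    rw [Finset.mem_range] at hℓ
    rw [MvPolynomial.smul_eq_C_mul]
    refine Ideal.mul_mem_left _ _ (IH _ ?_ ?_) <;> omega

lemma ker_eq_spanX : RingHom.ker (thetaHom F).toRingHom
    = Ideal.span (Set.range (MvPolynomial.X : ℕ+ → MvPolynomial ℕ+ F)) := by
  apply le_antisymm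
  · intro p hp
    rw [RingHom.mem_ker, theta_ring] at hp
    rw [as_sum p]
    refine Ideal.sum_mem _ fun d hd => ?_
    have hd0 : d ≠ 0 := by
      rintro rfl
      rw [mem_support_iff] at hd
      exact hd hp
    obtain ⟨i, hi⟩ := Finsupp.ne_iff.mp hd0
    simp only [Finsupp.coe_zero, Pi.zero_apply] at hi
    have hrep : MvPolynomial.monomial d (coeff d p)
        = MvPolynomial.monomial (d - Finsupp.single i 1) (coeff d p) * X i := by
      rw [MvPolynomial.X, monomial_mul, mul_one]
      congr 1
      apply congrArg
      exact (tsub_add_cancel_of_le (Finsupp.single_le_iff.mpr (Nat.one_le_iff_ne_zero.mpr hi))).symm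
    rw [hrep]
    exact Ideal.mul_mem_left _ _ (Ideal.subset_span ⟨i, rfl⟩)
  · rw [Ideal.span_le]
    rintro _ ⟨i, rfl⟩
    rw [SetLike.mem_coe, RingHom.mem_ker, theta_ring]
    exact MvPolynomial.constantCoeff_X (R := F) i

lemma ker_eq_sup : Submodule.restrictScalars F (RingHom.ker (thetaHom F).toRingHom)
    = ⨆ n : ℕ, ⨆ _ : 1 ≤ n,
        weightedHomogeneousSubmodule F (fun i : ℕ+ => (i : ℕ)) n := by
  apply le_antisymm
  · intro p hp
    rw [Submodule.restrictScalars_mem, RingHom.mem_ker, theta_ring] at hp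
    rw [as_sum p]
    refine Submodule.sum_mem _ fun d hd => ?_
    have hd0 : d ≠ 0 := by
      rintro rfl
      rw [mem_support_iff] at hd
      exact hd hp
    obtain ⟨i, hi⟩ := Finsupp.ne_iff.mp hd0
    simp only [Finsupp.coe_zero, Pi.zero_apply] at hi
    have h1 : 1 ≤ Finsupp.weight (fun i : ℕ+ => (i : ℕ)) d :=
      le_trans i.2 (Finsupp.le_weight_of_ne_zero' _ hi)
    refine Submodule.mem_iSup_of_mem (Finsupp.weight (fun i : ℕ+ => (i : ℕ)) d)
      (Submodule.mem_iSup_of_mem h1 ?_)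
    rw [mem_weightedHomogeneousSubmodule]
    exact isWeightedHomogeneous_monomial _ _ _ rfl
  · refine iSup_le fun n => iSup_le fun hn => fun p hp => ?_
    rw [mem_weightedHomogeneousSubmodule] at hp
    rw [Submodule.restrictScalars_mem, RingHom.mem_ker, theta_ring]
    by_contra h
    have h0 := hp (d := 0) h
    rw [map_zero] at h0
    omega

lemma ker_eq_spanZvee (q : F) (hq0 : q ≠ 0) (hq : ∀ n : ℕ, 0 < n → q ^ n ≠ 1) :
    RingHom.ker (thetaHom F).toRingHom
      = Ideal.span (Set.range fun i : ℕ+ => zvee F q (i : ℕ)) := by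
  rw [ker_eq_spanX]
  apply le_antisymm
  · rw [Ideal.span_le]
    rintro _ ⟨i, rfl⟩
    rw [← z_pnat i]
    exact SetLike.mem_coe.mpr (z_mem_spanZvee q hq0 hq (i : ℕ) (i : ℕ) i.2 le_rfl)
  · rw [Ideal.span_le]
    rintro _ ⟨i, rfl⟩
    exact SetLike.mem_coe.mpr (zvee_mem_spanX i.2)

variable (F)

/-- In `F[z_1,z_2,…]` the following coincide: the kernel of `θ : z_n ↦ 0`; the sum
`∑_{n≥1} P_n` of the positive-degree homogeneous components; the ideal generated by
`{z_n}_{n≥1}`; and the ideal generated by `{z^∨_n}_{n≥1}`. -/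
theorem ker_theta_eq (q : F) (hq0 : q ≠ 0) (hq : ∀ n : ℕ, 0 < n → q ^ n ≠ 1) :
    ((RingHom.ker (thetaHom F).toRingHom : Ideal (MvPolynomial ℕ+ F)) :
        Set (MvPolynomial ℕ+ F))
      = ((⨆ n : ℕ, ⨆ _ : 1 ≤ n,
          MvPolynomial.weightedHomogeneousSubmodule F (fun i : ℕ+ => (i : ℕ)) n :
            Submodule F (MvPolynomial ℕ+ F)) : Set (MvPolynomial ℕ+ F)) ∧
    ((RingHom.ker (thetaHom F).toRingHom : Ideal (MvPolynomial ℕ+ F)) :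
        Set (MvPolynomial ℕ+ F))
      = ((Ideal.span (Set.range (MvPolynomial.X : ℕ+ → MvPolynomial ℕ+ F)) :
          Ideal (MvPolynomial ℕ+ F)) : Set (MvPolynomial ℕ+ F)) ∧
    ((RingHom.ker (thetaHom F).toRingHom : Ideal (MvPolynomial ℕ+ F)) :
        Set (MvPolynomial ℕ+ F))
      = ((Ideal.span (Set.range fun i : ℕ+ => zvee F q (i : ℕ)) :
          Ideal (MvPolynomial ℕ+ F)) : Set (MvPolynomial ℕ+ F)) := by
  refine ⟨?_, congrArg SetLike.coe ker_eq_spanX,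
    congrArg SetLike.coe (ker_eq_spanZvee q hq0 hq)⟩
  calc ((RingHom.ker (thetaHom F).toRingHom : Ideal (MvPolynomial ℕ+ F)) :
      Set (MvPolynomial ℕ+ F))
      = ((Submodule.restrictScalars F (RingHom.ker (thetaHom F).toRingHom) :
          Submodule F (MvPolynomial ℕ+ F)) : Set (MvPolynomial ℕ+ F)) := rfl
    _ = _ := congrArg SetLike.coe ker_eq_sup
end
end
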